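/- arXiv:2109.00776 — 6 statements merged into one kernel-verified Lean document; each statement's English description precedes it below -/
import Mathlib

section
/- If λ and λ' are partitions of positive integers with λ ≤ λ', then every λ-choosable finite simple graph is λ'-choosable. -/
/-- `lam` is a partition of `k`: a finite multiset of positive integers summing to `k`. -/
def IsPartitionOf (lam : Multiset ℕ) (k : ℕ) : Prop :=
  (∀ a ∈ lam, 0 < a) ∧ lam.sum = k

/-- `lam'` is a refinement of `lam`: `lam'` is obtained from `lam` by replacing
some parts of `lam` by partitions of these parts. -/
def PartitionRefines (lam' lam : Multiset ℕ) : Prop :=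
  ∃ M : Multiset (Multiset ℕ),
    M.map Multiset.sum = lam ∧ M.join = lam' ∧ ∀ m ∈ M, ∀ a ∈ m, 0 < a

/-- `lam ≤ lam'`: there is a partition `lam''` obtained from `lam` by increasing
some of its parts such that `lam'` is a refinement of `lam''`. -/
def PartitionLE (lam lam' : Multiset ℕ) : Prop :=
  ∃ lam'' : Multiset ℕ, Multiset.Rel (· ≤ ·) lam lam'' ∧ PartitionRefines lam' lam''

/-- `L` is a `lam`-assignment: a `k`-assignment (`k = lam.sum`) such that the set of colours
`⋃ v, L v` can be partitioned into colour groups `C_1, …, C_q` with `|L v ∩ C_i| = k_i`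
for every vertex `v` and every part `k_i` of `lam`. -/
def IsLamAssignment {V : Type*} (lam : Multiset ℕ) (L : V → Finset ℕ) : Prop :=
  (∀ v, (L v).card = lam.sum) ∧
  ∃ (q : ℕ) (ks : Fin q → ℕ) (Cs : Fin q → Finset ℕ),
    (↑(List.ofFn ks) : Multiset ℕ) = lam ∧
    (Pairwise fun i j => Disjoint (Cs i) (Cs j)) ∧
    (∀ c : ℕ, (∃ v, c ∈ L v) ↔ ∃ i, c ∈ Cs i) ∧
    ∀ v i, ((L v) ∩ Cs i).card = ks i

/-- `G` is `lam`-choosable: `G` has a proper `L`-colouring for every `lam`-assignment `L`. -/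
def LamChoosable {V : Type*} (lam : Multiset ℕ) (G : SimpleGraph V) : Prop :=
  ∀ L : V → Finset ℕ, IsLamAssignment lam L →
    ∃ f : V → ℕ, (∀ v, f v ∈ L v) ∧ ∀ ⦃u w⦄, G.Adj u w → f u ≠ f w

/-! ### Auxiliary machinery -/

/-- Union of a list of finsets. -/
def funion (l : List (Finset ℕ)) : Finset ℕ := l.foldr (· ∪ ·) ∅

lemma mem_funion {c : ℕ} {l : List (Finset ℕ)} : c ∈ funion l ↔ ∃ s ∈ l, c ∈ s := by
  induction l with
  | nil => simp [funion]
  | cons a l ih =>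
    show c ∈ a ∪ funion l ↔ _
    simp [Finset.mem_union, ih]

lemma disjoint_funion_right {t : Finset ℕ} {l : List (Finset ℕ)}
    (h : ∀ s ∈ l, Disjoint t s) : Disjoint t (funion l) := by
  rw [Finset.disjoint_left]
  intro a ha hfa
  obtain ⟨s, hs, has⟩ := mem_funion.mp hfa
  exact (Finset.disjoint_left.mp (h s hs)) ha has

lemma disjoint_funion_left {t : Finset ℕ} {l : List (Finset ℕ)}
    (h : ∀ s ∈ l, Disjoint s t) : Disjoint (funion l) t :=
  (disjoint_funion_right (fun s hs => (h s hs).symm)).symm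

lemma permpull {α β : Type*} (f : α → β) :
    ∀ (J : List β) (l : List α), (l.map f).Perm J → ∃ l2 : List α, l2.Perm l ∧ l2.map f = J := by
  intro J
  induction J with
  | nil =>
    intro l h
    rw [List.perm_nil, List.map_eq_nil_iff] at h
    exact ⟨[], by subst h; exact List.Perm.refl _, rfl⟩
  | cons b J ih =>
    intro l h
    have hb : b ∈ l.map f := h.symm.subset List.mem_cons_self
    obtain ⟨a, ha, rfl⟩ := List.mem_map.mp hb
    obtain ⟨u, w, rfl⟩ := List.append_of_mem ha
    have hmid : ((a :: (u ++ w)).map f).Perm ((u ++ a :: w).map f) :=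
      (List.perm_middle (l₁ := u) (l₂ := w) (a := a)).symm.map f
    have h2 : ((u ++ w).map f).Perm J := by
      have := hmid.trans h
      simpa using this.cons_inv
    obtain ⟨l2, hp, hm⟩ := ih _ h2
    exact ⟨a :: l2, (hp.cons a).trans List.perm_middle.symm, by simp [hm]⟩

lemma split {α β : Type*} (f : α → β) :
    ∀ (Ln : List (List β)) (l : List α), l.map f = Ln.flatten →
      ∃ LL : List (List α), LL.flatten = l ∧ LL.map (fun b => b.map f) = Ln := by
  intro Ln
  induction Ln with
  | nil =>
    intro l h
    simp only [List.flatten_nil, List.map_eq_nil_iff] at h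
    exact ⟨[], by simp [h], rfl⟩
  | cons b Ln ih =>
    intro l h
    have h1 : (l.take b.length).map f = b := by
      rw [List.map_take, h, List.flatten_cons, List.take_left]
    have h2 : (l.drop b.length).map f = Ln.flatten := by
      rw [List.map_drop, h, List.flatten_cons, List.drop_left]
    obtain ⟨LL, hflat, hmap⟩ := ih _ h2
    exact ⟨l.take b.length :: LL,
      by simp [List.flatten_cons, hflat, List.take_append_drop],
      by simp [hmap, h1]⟩

lemma pairwise_funion {LL : List (List (ℕ × Finset ℕ))}
    (h : (LL.flatten.map Prod.snd).Pairwise Disjoint) :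
    (LL.map (fun b => funion (b.map Prod.snd))).Pairwise Disjoint := by
  induction LL with
  | nil => simp
  | cons b LL ih =>
    simp only [List.flatten_cons, List.map_append, List.pairwise_append] at h
    obtain ⟨h1, h2, h3⟩ := h
    refine List.Pairwise.cons ?_ (ih h2)
    intro t ht
    obtain ⟨c, hc, rfl⟩ := List.mem_map.mp ht
    apply disjoint_funion_left
    intro x hx
    apply disjoint_funion_right
    intro y hy
    obtain ⟨p, hp, rfl⟩ := List.mem_map.mp hy
    exact h3 x hx p.2 (List.mem_map.mpr ⟨p, List.mem_flatten.mpr ⟨c, hc, hp⟩, rfl⟩)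

lemma card_inter_funion (S : Finset ℕ) :
    ∀ (b : List (ℕ × Finset ℕ)),
      (b.map Prod.snd).Pairwise Disjoint →
      (∀ p ∈ b, (S ∩ p.2).card = p.1) →
      (S ∩ funion (b.map Prod.snd)).card = (b.map Prod.fst).sum := by
  intro b
  induction b with
  | nil => simp [funion]
  | cons p b ih =>
    intro hdisj hcard
    simp only [List.map_cons] at hdisj ⊢
    rw [List.pairwise_cons] at hdisj
    have hfu : funion (p.2 :: b.map Prod.snd) = p.2 ∪ funion (b.map Prod.snd) := rfl
    rw [hfu, Finset.inter_union_distrib_left, Finset.card_union_of_disjoint, List.sum_cons,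
      hcard p List.mem_cons_self, ih hdisj.2 (fun q hq => hcard q (List.mem_cons_of_mem _ hq))]
    exact Finset.disjoint_of_subset_left Finset.inter_subset_right
      (Finset.disjoint_of_subset_right Finset.inter_subset_right
        (disjoint_funion_right hdisj.1))

lemma merge_step {V : Type*} (L : V → Finset ℕ) (lam' lam'' : Multiset ℕ)
    (href : PartitionRefines lam' lam'')
    (l' : List (ℕ × Finset ℕ))
    (hfst : (↑(l'.map Prod.fst) : Multiset ℕ) = lam')
    (hdisj : (l'.map Prod.snd).Pairwise Disjoint)
    (hcard : ∀ v, ∀ p ∈ l', ((L v) ∩ p.2).card = p.1) :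
    ∃ l'' : List (ℕ × Finset ℕ),
      (↑(l''.map Prod.fst) : Multiset ℕ) = lam'' ∧
      (l''.map Prod.snd).Pairwise Disjoint ∧
      ∀ v, ∀ p ∈ l'', ((L v) ∩ p.2).card = p.1 := by
  obtain ⟨M, hM1, hM2, -⟩ := href
  set Ln : List (List ℕ) := M.toList.map Multiset.toList with hLn
  have hLnc : Ln.map Multiset.ofList = M.toList := by
    rw [hLn, List.map_map]
    simp only [Function.comp_def, Multiset.coe_toList, List.map_id']
  have hJ : (↑Ln.flatten : Multiset ℕ) = lam' := by
    rw [← Multiset.coe_join, hLnc, Multiset.coe_toList, hM2]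
  have hperm : (l'.map Prod.fst).Perm Ln.flatten :=
    Multiset.coe_eq_coe.mp (hfst.trans hJ.symm)
  obtain ⟨l2, hl2p, hl2m⟩ := permpull Prod.fst Ln.flatten l' hperm
  obtain ⟨LL, hLflat, hLmap⟩ := split Prod.fst Ln l2 hl2m
  have hdisj2 : (l2.map Prod.snd).Pairwise Disjoint :=
    ((hl2p.map Prod.snd).pairwise_iff (fun hxy => hxy.symm)).mpr hdisj
  have hcard2 : ∀ v, ∀ p ∈ l2, ((L v) ∩ p.2).card = p.1 :=
    fun v p hp => hcard v p (hl2p.subset hp)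
  refine ⟨LL.map (fun b => ((b.map Prod.fst).sum, funion (b.map Prod.snd))), ?_, ?_, ?_⟩
  · have : (LL.map (fun b => ((b.map Prod.fst).sum, funion (b.map Prod.snd)))).map Prod.fst
        = Ln.map List.sum := by
      rw [List.map_map, ← hLmap, List.map_map]
      rfl
    rw [this, hLn, List.map_map]
    show (↑(M.toList.map (fun m : Multiset ℕ => m.toList.sum)) : Multiset ℕ) = lam''
    simp only [Multiset.sum_toList]
    rw [← hM1, ← Multiset.map_coe, Multiset.coe_toList]
  · have : (LL.map (fun b => ((b.map Prod.fst).sum, funion (b.map Prod.snd)))).map Prod.snd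
        = LL.map (fun b => funion (b.map Prod.snd)) := by
      rw [List.map_map]; rfl
    rw [this]
    exact pairwise_funion (by rw [hLflat]; exact hdisj2)
  · intro v p hp
    obtain ⟨b, hb, rfl⟩ := List.mem_map.mp hp
    have hbsub : b.Sublist l2 := hLflat ▸ List.sublist_flatten_of_mem hb
    exact card_inter_funion (L v) b
      (List.Pairwise.sublist (hbsub.map Prod.snd) hdisj2)
      (fun q hq => hcard2 v q (hbsub.subset hq))

lemma rel_to_list :
    ∀ (l2 : List ℕ) (lam : Multiset ℕ), Multiset.Rel (· ≤ ·) lam ↑l2 →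
      ∃ l1 : List ℕ, (↑l1 : Multiset ℕ) = lam ∧ List.Forall₂ (· ≤ ·) l1 l2 := by
  intro l2
  induction l2 with
  | nil =>
    intro lam h
    rw [show ((([] : List ℕ)) : Multiset ℕ) = 0 from rfl, Multiset.rel_zero_right] at h
    exact ⟨[], by simp [h], List.Forall₂.nil⟩
  | cons b l2 ih =>
    intro lam h
    rw [show ((b :: l2 : List ℕ) : Multiset ℕ) = b ::ₘ ↑l2 from rfl,
      Multiset.rel_cons_right] at h
    obtain ⟨a, lam0, hab, hrel, rfl⟩ := h
    obtain ⟨l1, h1, h2⟩ := ih lam0 hrel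
    exact ⟨a :: l1, by rw [← h1]; rfl, List.Forall₂.cons hab h2⟩

lemma shrink {V : Type*} [Fintype V] (L : V → Finset ℕ) (lam : Multiset ℕ)
    (q : ℕ) (kl ks : Fin q → ℕ) (Cs : Fin q → Finset ℕ)
    (hlam : (↑(List.ofFn kl) : Multiset ℕ) = lam)
    (hle : ∀ i, kl i ≤ ks i)
    (hdisj : Pairwise fun i j => Disjoint (Cs i) (Cs j))
    (hcard : ∀ v i, ((L v) ∩ Cs i).card = ks i) :
    ∃ L' : V → Finset ℕ, (∀ v, L' v ⊆ L v) ∧ IsLamAssignment lam L' := by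
  classical
  have hex : ∀ v i, ∃ t ⊆ (L v ∩ Cs i), t.card = kl i := fun v i =>
    Finset.exists_subset_card_eq (by rw [hcard]; exact hle i)
  choose S hS1 hS2 using hex
  set L' : V → Finset ℕ := fun v => Finset.univ.biUnion (S v) with hL'
  have hsub : ∀ v, L' v ⊆ L v := by
    intro v c hc
    obtain ⟨i, -, hi⟩ := Finset.mem_biUnion.mp hc
    exact (Finset.mem_inter.mp (hS1 v i hi)).1
  set U : Finset ℕ := Finset.univ.biUnion L' with hU
  have key : ∀ v i, L' v ∩ Cs i = S v i := by
    intro v i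
    apply Finset.Subset.antisymm
    · intro c hc
      obtain ⟨hc1, hc2⟩ := Finset.mem_inter.mp hc
      obtain ⟨j, -, hj⟩ := Finset.mem_biUnion.mp hc1
      rcases eq_or_ne j i with rfl | hne
      · exact hj
      · exact absurd hc2 (Finset.disjoint_left.mp (hdisj hne)
          ((Finset.mem_inter.mp (hS1 v j hj)).2))
    · intro c hc
      exact Finset.mem_inter.mpr ⟨Finset.mem_biUnion.mpr ⟨i, Finset.mem_univ _, hc⟩,
        (Finset.mem_inter.mp (hS1 v i hc)).2⟩
  refine ⟨L', hsub, ?_, q, kl, fun i => Cs i ∩ U, hlam, ?_, ?_, ?_⟩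
  · intro v
    have hdS : ∀ i ∈ (Finset.univ : Finset (Fin q)), ∀ j ∈ (Finset.univ : Finset (Fin q)),
        i ≠ j → Disjoint (S v i) (S v j) := by
      intro i _ j _ hij
      exact (hdisj hij).mono ((hS1 v i).trans Finset.inter_subset_right)
        ((hS1 v j).trans Finset.inter_subset_right)
    have : (L' v).card = ∑ i, kl i := by
      rw [hL', Finset.card_biUnion hdS]
      exact Finset.sum_congr rfl fun i _ => hS2 v i
    rw [this, ← hlam]
    show _ = (List.ofFn kl).sum
    rw [List.sum_ofFn]
  · intro i j hij
    exact (hdisj hij).mono Finset.inter_subset_left Finset.inter_subset_left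
  · intro c
    constructor
    · rintro ⟨v, hc⟩
      obtain ⟨i, -, hi⟩ := Finset.mem_biUnion.mp hc
      exact ⟨i, Finset.mem_inter.mpr ⟨(Finset.mem_inter.mp (hS1 v i hi)).2,
        Finset.mem_biUnion.mpr ⟨v, Finset.mem_univ _, hc⟩⟩⟩
    · rintro ⟨i, hi⟩
      obtain ⟨v, -, hv⟩ := Finset.mem_biUnion.mp (Finset.mem_inter.mp hi).2
      exact ⟨v, hv⟩
  · intro v i
    have heq : L' v ∩ (Cs i ∩ U) = L' v ∩ Cs i := by
      ext c
      simp only [Finset.mem_inter]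
      constructor
      · rintro ⟨h1, h2, -⟩; exact ⟨h1, h2⟩
      · rintro ⟨h1, h2⟩
        exact ⟨h1, h2, Finset.mem_biUnion.mpr ⟨v, Finset.mem_univ _, h1⟩⟩
    rw [heq, key, hS2]

/-- If `lam` and `lam'` are partitions of positive integers `k` and `k'` with `lam ≤ lam'`,
then every `lam`-choosable finite simple graph is `lam'`-choosable. -/
theorem lamChoosable_of_partitionLE (k k' : ℕ) (hk : 0 < k) (hk' : 0 < k')
    (lam lam' : Multiset ℕ) (hlam : IsPartitionOf lam k) (hlam' : IsPartitionOf lam' k')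
    (hle : PartitionLE lam lam')
    {V : Type*} [Fintype V] (G : SimpleGraph V) (h : LamChoosable lam G) :
    LamChoosable lam' G := by
  obtain ⟨lam'', hrel, href⟩ := hle
  intro L hL
  obtain ⟨hcardL, q', ks', Cs', hofn, hdisj', hcov', hcard'⟩ := hL
  -- list data for the `lam'`-assignment
  have hfst : (↑((List.ofFn (fun i => (ks' i, Cs' i))).map Prod.fst) : Multiset ℕ) = lam' := by
    rw [List.map_ofFn]
    exact hofn
  have hdisjl : ((List.ofFn (fun i => (ks' i, Cs' i))).map Prod.snd).Pairwise Disjoint := by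
    rw [List.map_ofFn, List.pairwise_ofFn]
    intro i j hij
    exact hdisj' hij.ne
  have hcardl : ∀ v, ∀ p ∈ List.ofFn (fun i => (ks' i, Cs' i)), ((L v) ∩ p.2).card = p.1 := by
    intro v p hp
    obtain ⟨i, rfl⟩ := List.mem_ofFn.mp hp
    exact hcard' v i
  obtain ⟨l'', h1, h2, h3⟩ := merge_step L lam' lam'' href _ hfst hdisjl hcardl
  obtain ⟨l1, hl1, hF⟩ := rel_to_list (l''.map Prod.fst) lam (by rw [h1]; exact hrel)
  have hlen : l1.length = l''.length := by
    have := hF.length_eq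
    simpa using this
  -- Fin-level data for `lam''` with lower bounds from `lam`
  have hofnkl : (List.ofFn (fun i : Fin l''.length => l1[(i : ℕ)]'(by omega))) = l1 := by
    apply List.ext_getElem
    · simp [hlen]
    · intro n h1n h2n
      simp [List.getElem_ofFn]
  obtain ⟨L', hsub, hass⟩ := shrink L lam l''.length
    (fun i => l1[(i : ℕ)]'(by omega))
    (fun i => (l''.get i).1) (fun i => (l''.get i).2)
    (by rw [hofnkl]; exact hl1)
    (by
      intro i
      have := (List.forall₂_iff_get.mp hF).2 i (by omega) (by simp)
      simpa using this)
    (by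
      intro i j hij
      have hp := List.pairwise_iff_get.mp h2
      rcases lt_or_gt_of_ne hij with hlt | hgt
      · have := hp ⟨i, by simp⟩ ⟨j, by simp⟩ (by simpa using hlt)
        simpa using this
      · have := hp ⟨j, by simp⟩ ⟨i, by simp⟩ (by simpa using hgt)
        exact (by simpa using this : Disjoint (l''.get j).2 (l''.get i).2).symm)
    (fun v i => h3 v _ (List.get_mem l'' i))
  obtain ⟨f, hf1, hf2⟩ := h L' hass
  exact ⟨f, fun v => hsub v (hf1 v), hf2⟩
end

section
/- Let λ and λ' be partitions of positive integers. If every λ-choosable finite simple graph is λ'-choosable, then λ ≤ λ'. -/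
namespace PLE

/-! Auxiliary development for the main theorem.  Colours are grouped into intervals
`Cgrp j = [off j, off j + 2 * k'_j)`, a *shape* is a possible list: a set of colours meeting
each group `Cgrp j` in exactly `k'_j` colours.  The witness graph `Gr` is the join over
`i < Ks.length` of disjoint unions of cliques of size `Ks[i]`, one for each shape. -/

def off (Ks' : List ℕ) (j : ℕ) : ℕ := 2 * (Ks'.take j).sum

def Cgrp (Ks' : List ℕ) (j : Fin Ks'.length) : Finset ℕ :=
  Finset.Ico (off Ks' j) (off Ks' j + 2 * Ks'.get j)

def ColUniv (Ks' : List ℕ) : Finset ℕ := Finset.univ.biUnion (Cgrp Ks')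

def Shapes (Ks' : List ℕ) : Finset (Finset ℕ) :=
  (ColUniv Ks').powerset.filter (fun ℓ => ∀ j, (ℓ ∩ Cgrp Ks' j).card = Ks'.get j)

variable (Ks' Ks : List ℕ)

lemma off_succ (j : ℕ) (h : j < Ks'.length) :
    off Ks' (j + 1) = off Ks' j + 2 * Ks'.get ⟨j, h⟩ := by
  unfold off
  rw [List.sum_take_succ _ _ h]
  simp [Nat.mul_add, List.get_eq_getElem]

lemma off_mono : Monotone (off Ks') := by
  intro a b hab
  unfold off
  apply Nat.mul_le_mul_left
  have h1 : Ks'.take a = (Ks'.take b).take a := by rw [List.take_take, Nat.min_eq_left hab]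
  rw [h1]
  calc ((Ks'.take b).take a).sum ≤ ((Ks'.take b).take a).sum + ((Ks'.take b).drop a).sum :=
        Nat.le_add_right _ _
    _ = (Ks'.take b).sum := by rw [List.sum_take_add_sum_drop]

lemma cgrp_card (j : Fin Ks'.length) : (Cgrp Ks' j).card = 2 * Ks'.get j := by
  simp [Cgrp]

lemma cgrp_disjoint {j j' : Fin Ks'.length} (h : j ≠ j') :
    Disjoint (Cgrp Ks' j) (Cgrp Ks' j') := by
  have key : ∀ {a b : Fin Ks'.length}, (a : ℕ) < (b : ℕ) →
      Disjoint (Cgrp Ks' a) (Cgrp Ks' b) := by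
    intro a b hab
    rw [Finset.disjoint_left]
    intro c hc hc'
    rw [Cgrp, Finset.mem_Ico] at hc hc'
    have h1 : off Ks' ((a : ℕ) + 1) ≤ off Ks' (b : ℕ) := off_mono Ks' hab
    rw [off_succ Ks' a a.isLt] at h1
    have h2 : (⟨(a : ℕ), a.isLt⟩ : Fin Ks'.length) = a := rfl
    rw [h2] at h1
    omega
  have hne : (j : ℕ) ≠ (j' : ℕ) := fun hv => h (Fin.ext hv)
  rcases Nat.lt_or_ge (j : ℕ) (j' : ℕ) with hlt | hge
  · exact key hlt
  · exact (key (lt_of_le_of_ne hge hne.symm)).symm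

lemma mem_shapes {ℓ : Finset ℕ} :
    ℓ ∈ Shapes Ks' ↔ ℓ ⊆ ColUniv Ks' ∧ ∀ j, (ℓ ∩ Cgrp Ks' j).card = Ks'.get j := by
  simp [Shapes, Finset.mem_filter, Finset.mem_powerset]

lemma shape_decomp {ℓ : Finset ℕ} (hℓ : ℓ ∈ Shapes Ks') :
    ℓ = Finset.univ.biUnion (fun j => ℓ ∩ Cgrp Ks' j) := by
  rw [mem_shapes] at hℓ
  apply Finset.Subset.antisymm
  · intro c hc
    have := hℓ.1 hc
    rw [ColUniv, Finset.mem_biUnion] at this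
    obtain ⟨j, -, hj⟩ := this
    exact Finset.mem_biUnion.mpr ⟨j, Finset.mem_univ j, Finset.mem_inter.mpr ⟨hc, hj⟩⟩
  · intro c hc
    rw [Finset.mem_biUnion] at hc
    obtain ⟨j, -, hj⟩ := hc
    exact (Finset.mem_inter.mp hj).1

lemma shape_card {ℓ : Finset ℕ} (hℓ : ℓ ∈ Shapes Ks') : ℓ.card = Ks'.sum := by
  conv_lhs => rw [shape_decomp Ks' hℓ]
  rw [Finset.card_biUnion]
  · rw [mem_shapes] at hℓ
    calc ∑ j, (ℓ ∩ Cgrp Ks' j).card = ∑ j : Fin Ks'.length, Ks'.get j := by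
          exact Finset.sum_congr rfl fun j _ => hℓ.2 j
      _ = Ks'.sum := by simpa using Fin.sum_univ_get Ks'
  · intro j _ j' _ hne
    exact (cgrp_disjoint Ks' hne).mono (Finset.inter_subset_right) (Finset.inter_subset_right)

lemma shape_of_parts (B : Fin Ks'.length → Finset ℕ) (hB : ∀ j, B j ⊆ Cgrp Ks' j)
    (hcard : ∀ j, (B j).card = Ks'.get j) :
    Finset.univ.biUnion B ∈ Shapes Ks' ∧ ∀ j, (Finset.univ.biUnion B ∩ Cgrp Ks' j) = B j := by
  have hint : ∀ j, (Finset.univ.biUnion B ∩ Cgrp Ks' j) = B j := by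
    intro j
    apply Finset.Subset.antisymm
    · intro c hc
      rw [Finset.mem_inter, Finset.mem_biUnion] at hc
      obtain ⟨⟨j', -, hj'⟩, hcj⟩ := hc
      rcases eq_or_ne j' j with rfl | hne
      · exact hj'
      · exact absurd (Finset.disjoint_left.mp (cgrp_disjoint Ks' hne) (hB j' hj') hcj)
          (fun h => h)
    · intro c hc
      exact Finset.mem_inter.mpr ⟨Finset.mem_biUnion.mpr ⟨j, Finset.mem_univ j, hc⟩, hB j hc⟩
  refine ⟨(mem_shapes Ks').mpr ⟨?_, fun j => by rw [hint j]; exact hcard j⟩, hint⟩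
  intro c hc
  rw [Finset.mem_biUnion] at hc
  obtain ⟨j, -, hj⟩ := hc
  exact Finset.mem_biUnion.mpr ⟨j, Finset.mem_univ j, hB j hj⟩

lemma exists_shape_mem (hpos : ∀ a ∈ Ks', 0 < a) {c : ℕ} {j₀ : Fin Ks'.length}
    (hc : c ∈ Cgrp Ks' j₀) : ∃ ℓ ∈ Shapes Ks', c ∈ ℓ := by
  classical
  have hchoice : ∀ j : Fin Ks'.length, ∃ B : Finset ℕ, B ⊆ Cgrp Ks' j ∧
      (B).card = Ks'.get j ∧ (j = j₀ → c ∈ B) := by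
    intro j
    rcases eq_or_ne j j₀ with rfl | hne
    · have h1 : Ks'.get j - 1 ≤ ((Cgrp Ks' j).erase c).card := by
        rw [Finset.card_erase_of_mem hc, cgrp_card]
        have := hpos (Ks'.get j) (Ks'.get_mem j)
        omega
      obtain ⟨T, hT, hTcard⟩ := Finset.exists_subset_card_eq h1
      refine ⟨insert c T, ?_, ?_, fun _ => Finset.mem_insert_self c T⟩
      · intro x hx
        rcases Finset.mem_insert.mp hx with rfl | hx
        · exact hc
        · exact Finset.erase_subset _ _ (hT hx)
      · rw [Finset.card_insert_of_notMem (fun hcT => (Finset.notMem_erase c _) (hT hcT)),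
          hTcard]
        have := hpos (Ks'.get j) (Ks'.get_mem j)
        omega
    · have h1 : Ks'.get j ≤ (Cgrp Ks' j).card := by rw [cgrp_card]; omega
      obtain ⟨T, hT, hTcard⟩ := Finset.exists_subset_card_eq h1
      exact ⟨T, hT, hTcard, fun h => absurd h hne⟩
  choose B hB1 hB2 hB3 using hchoice
  obtain ⟨hmem, -⟩ := shape_of_parts Ks' B hB1 hB2
  exact ⟨Finset.univ.biUnion B, hmem,
    Finset.mem_biUnion.mpr ⟨j₀, Finset.mem_univ j₀, hB3 j₀ rfl⟩⟩

lemma get_le_sum (l : List ℕ) (i : Fin l.length) : l.get i ≤ l.sum :=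
  List.single_le_sum (fun x _ => Nat.zero_le x) _ (l.get_mem i)

abbrev Vtx := Fin Ks.length × {s // s ∈ Shapes Ks'} × Fin Ks.sum

def Gr : SimpleGraph (Vtx Ks' Ks) where
  Adj u v := u.1 ≠ v.1 ∨
    (u.1 = v.1 ∧ u.2.1 = v.2.1 ∧ u.2.2 ≠ v.2.2 ∧
      (u.2.2 : ℕ) < Ks.get u.1 ∧ (v.2.2 : ℕ) < Ks.get v.1)
  symm := by
    constructor
    rintro u v (h | ⟨h1, h2, h3, h4, h5⟩)
    · exact Or.inl (Ne.symm h)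
    · exact Or.inr ⟨h1.symm, h2.symm, h3.symm, h5, h4⟩
  loopless := ⟨by rintro u (h | ⟨-, -, h, -, -⟩) <;> exact h rfl⟩

lemma gr_choosable (hpos : ∀ a ∈ Ks, 0 < a) (hsorted : Ks.Pairwise (· ≤ ·)) :
    LamChoosable (↑Ks) (Gr Ks' Ks) := by
  rintro L0 ⟨-, q0, ks0, Cs0, hofn, hdisj, -, hcap⟩
  classical
  set σ : Equiv.Perm (Fin q0) := Tuple.sort ks0 with hσ
  have hperm : (List.ofFn (ks0 ∘ σ)).Perm Ks := by
    refine (σ.ofFn_comp_perm ks0).trans ?_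
    rw [← Multiset.coe_eq_coe, hofn]
  have heq : List.ofFn (ks0 ∘ σ) = Ks :=
    List.Perm.eq_of_pairwise' (List.pairwise_ofFn.mpr (fun i j hij => Tuple.monotone_sort ks0 hij.le)) hsorted hperm
  have hq : q0 = Ks.length := by simpa using congrArg List.length heq
  set e : Fin Ks.length → Fin q0 := fun i => σ (Fin.cast hq.symm i) with he
  have heinj : Function.Injective e := fun a b hab => by
    have := σ.injective hab
    simpa [Fin.ext_iff] using this
  have hks : ∀ i : Fin Ks.length, ks0 (e i) = Ks.get i := by
    intro i
    have hlen : (List.ofFn (ks0 ∘ ⇑σ)).length = Ks.length := by rw [heq]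
    have h1 := List.get_of_eq heq ⟨(i : ℕ), by rw [hlen]; exact i.isLt⟩
    rw [List.get_ofFn] at h1
    exact h1
  have hall : ∀ (i : Fin Ks.length) (s : {s // s ∈ Shapes Ks'}),
      ∃ g : Fin (Ks.get i) → ℕ, Function.Injective g ∧
        ∀ a : Fin (Ks.get i),
          g a ∈ L0 (i, s, ⟨(a : ℕ), lt_of_lt_of_le a.isLt (get_le_sum Ks i)⟩) ∩ Cs0 (e i) := by
    intro i s
    set T : Fin (Ks.get i) → Finset ℕ := fun a =>
      L0 (i, s, ⟨(a : ℕ), lt_of_lt_of_le a.isLt (get_le_sum Ks i)⟩) ∩ Cs0 (e i) with hT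
    apply (Finset.all_card_le_biUnion_card_iff_exists_injective T).mp
    intro t
    rcases t.eq_empty_or_nonempty with rfl | ⟨a, ha⟩
    · simp
    · calc t.card ≤ Fintype.card (Fin (Ks.get i)) := Finset.card_le_univ t
        _ = Ks.get i := Fintype.card_fin _
        _ = (T a).card := by rw [hT]; rw [hcap _ (e i), hks i]
        _ ≤ (t.biUnion T).card :=
            Finset.card_le_card (Finset.subset_biUnion_of_mem T ha)
  choose g hginj hgmem using hall
  have hne : ∀ v : Vtx Ks' Ks, (L0 v ∩ Cs0 (e v.1)).Nonempty := by
    intro v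
    rw [← Finset.card_pos, hcap _ (e v.1), hks v.1]
    exact hpos _ (Ks.get_mem v.1)
  choose pick hpick using hne
  refine ⟨fun v => if h : (v.2.2 : ℕ) < Ks.get v.1
      then g v.1 v.2.1 ⟨(v.2.2 : ℕ), h⟩ else pick v, fun v => ?_, fun u w hadj heq2 => ?_⟩
  · obtain ⟨i, s, a⟩ := v
    change (if h : (a : ℕ) < Ks.get i then g i s ⟨(a : ℕ), h⟩ else pick (i, s, a)) ∈ _
    by_cases h : (a : ℕ) < Ks.get i
    · rw [dif_pos h]
      exact (Finset.mem_inter.mp (hgmem i s ⟨(a : ℕ), h⟩)).1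
    · rw [dif_neg h]
      exact (Finset.mem_inter.mp (hpick (i, s, a))).1
  · have hmemC : ∀ v : Vtx Ks' Ks,
        (if h : (v.2.2 : ℕ) < Ks.get v.1
          then g v.1 v.2.1 ⟨(v.2.2 : ℕ), h⟩ else pick v) ∈ Cs0 (e v.1) := by
      intro v
      by_cases h : (v.2.2 : ℕ) < Ks.get v.1
      · rw [dif_pos h]
        exact (Finset.mem_inter.mp (hgmem v.1 v.2.1 ⟨(v.2.2 : ℕ), h⟩)).2
      · rw [dif_neg h]
        exact (Finset.mem_inter.mp (hpick v)).2
    have m1 := hmemC u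
    have m2 := hmemC w
    rcases hadj with hne1 | ⟨h1, h2, h3, h4, h5⟩
    · have hd : Disjoint (Cs0 (e u.1)) (Cs0 (e w.1)) :=
        hdisj (fun hc => hne1 (heinj hc))
      dsimp only at heq2
      rw [heq2] at m1
      exact Finset.disjoint_left.mp hd m1 m2
    · obtain ⟨i, s, a⟩ := u
      obtain ⟨i', s', a'⟩ := w
      simp only at h1 h2 h3 h4 h5
      subst h1; subst h2
      dsimp only at heq2
      rw [dif_pos h4, dif_pos h5] at heq2
      have hval : (a : ℕ) = (a' : ℕ) := by
        simpa [Fin.ext_iff] using hginj i s heq2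
      exact h3 (Fin.ext hval)

lemma map_val_eq_sum_singleton {β : Type*} (t : Finset β) (g : β → ℕ) :
    (t.val.map g : Multiset ℕ) = ∑ j ∈ t, ({g j} : Multiset ℕ) := by
  rw [Finset.sum_eq_multiset_sum]
  rw [show (Multiset.map (fun j => ({g j} : Multiset ℕ)) t.val)
      = (t.val.map g).map (fun a => ({a} : Multiset ℕ)) by rw [Multiset.map_map]; rfl]
  rw [Multiset.sum_map_singleton]

end PLE

/-- If `lam` and `lam'` are partitions of positive integers `k` and `k'` and every
`lam`-choosable finite simple graph is `lam'`-choosable, then `lam ≤ lam'`. -/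
theorem partitionLE_of_lamChoosable (k k' : ℕ) (hk : 0 < k) (hk' : 0 < k')
    (lam lam' : Multiset ℕ) (hlam : IsPartitionOf lam k) (hlam' : IsPartitionOf lam' k')
    (h : ∀ (V : Type) [Fintype V] (G : SimpleGraph V),
      LamChoosable lam G → LamChoosable lam' G) :
    PartitionLE lam lam' := by
  classical
  obtain ⟨hlampos, hlamsum⟩ := hlam
  obtain ⟨hlam'pos, hlam'sum⟩ := hlam'
  set Ks : List ℕ := Multiset.sort lam (· ≤ ·) with hKsdef
  set Ks' : List ℕ := lam'.toList with hKs'def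
  have hKscoe : (↑Ks : Multiset ℕ) = lam := Multiset.sort_eq lam _
  have hKs'coe : (↑Ks' : Multiset ℕ) = lam' := lam'.coe_toList
  have hKspos : ∀ a ∈ Ks, 0 < a := fun a ha => hlampos a (by rw [← hKscoe]; exact_mod_cast ha)
  have hKs'pos : ∀ a ∈ Ks', 0 < a := fun a ha =>
    hlam'pos a (by rw [← hKs'coe]; exact_mod_cast ha)
  have hsorted : Ks.Pairwise (· ≤ ·) := lam.pairwise_sort _
  have hKsum : Ks.sum = k := by
    rw [← hlamsum, ← hKscoe]; simp
  have hKs'sum : Ks'.sum = k' := by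
    rw [← hlam'sum, ← hKs'coe]; simp
  have hspos : 0 < Ks.sum := hKsum ▸ hk
  have hqpos : 0 < Ks.length := by
    rcases Ks with _ | ⟨a, l⟩
    · simp at hspos
    · simp
  -- the lam'-assignment on the witness graph
  set L : PLE.Vtx Ks' Ks → Finset ℕ := fun v => (v.2.1 : Finset ℕ) with hLdef
  have hassign : IsLamAssignment lam' L := by
    constructor
    · intro v
      simp only [hLdef]
      rw [PLE.shape_card Ks' v.2.1.2, hKs'sum, ← hlam'sum]
    · refine ⟨Ks'.length, Ks'.get, PLE.Cgrp Ks', ?_, ?_, ?_, ?_⟩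
      · rw [List.ofFn_get, hKs'coe]
      · intro j j' hne
        exact PLE.cgrp_disjoint Ks' hne
      · intro c
        constructor
        · rintro ⟨v, hc⟩
          simp only [hLdef] at hc
          have hv := ((PLE.mem_shapes Ks').mp v.2.1.2).1 hc
          rw [PLE.ColUniv, Finset.mem_biUnion] at hv
          obtain ⟨j, -, hj⟩ := hv
          exact ⟨j, hj⟩
        · rintro ⟨j, hj⟩
          obtain ⟨ℓ, hℓ, hcℓ⟩ := PLE.exists_shape_mem Ks' hKs'pos hj
          exact ⟨(⟨0, hqpos⟩, ⟨ℓ, hℓ⟩, ⟨0, hspos⟩), hcℓ⟩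
      · intro v j
        simp only [hLdef]
        exact ((PLE.mem_shapes Ks').mp v.2.1.2).2 j
  obtain ⟨f, hfmem, hfadj⟩ :=
    h (PLE.Vtx Ks' Ks) (PLE.Gr Ks' Ks)
      (hKscoe ▸ PLE.gr_choosable Ks' Ks hKspos hsorted) L hassign
  -- colours used on part `i`
  set U : Fin Ks.length → Finset ℕ := fun i =>
    Finset.image (fun z : {s // s ∈ PLE.Shapes Ks'} × Fin Ks.sum => f (i, z.1, z.2))
      Finset.univ with hU
  have hUdisj : ∀ {i i' : Fin Ks.length}, i ≠ i' → Disjoint (U i) (U i') := by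
    intro i i' hne
    rw [Finset.disjoint_left]
    rintro c hc hc'
    simp only [hU, Finset.mem_image] at hc hc'
    obtain ⟨z, -, rfl⟩ := hc
    obtain ⟨z', -, hz'⟩ := hc'
    exact hfadj (Or.inl (by simpa using hne)) hz'.symm
  have hkey : ∀ (i : Fin Ks.length) (ℓ : Finset ℕ), ℓ ∈ PLE.Shapes Ks' →
      Ks.get i ≤ (ℓ ∩ U i).card := by
    intro i ℓ hℓ
    have hmaps : ∀ n ∈ Finset.range (Ks.get i),
        (if hn : n < Ks.sum then f (i, ⟨ℓ, hℓ⟩, ⟨n, hn⟩) else 0) ∈ ℓ ∩ U i := by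
      intro n hn
      have hn' : n < Ks.sum :=
        lt_of_lt_of_le (Finset.mem_range.mp hn) (PLE.get_le_sum Ks i)
      rw [dif_pos hn']
      refine Finset.mem_inter.mpr ⟨?_, ?_⟩
      · have := hfmem (i, ⟨ℓ, hℓ⟩, ⟨n, hn'⟩)
        simpa [hLdef] using this
      · simp only [hU]
        exact Finset.mem_image.mpr ⟨(⟨ℓ, hℓ⟩, ⟨n, hn'⟩), Finset.mem_univ _, rfl⟩
    have hinj : Set.InjOn (fun n => if hn : n < Ks.sum then f (i, ⟨ℓ, hℓ⟩, ⟨n, hn⟩) else 0)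
        (Finset.range (Ks.get i)) := by
      intro n hn m hm hnm
      by_contra hne2
      simp only [Finset.coe_range, Set.mem_Iio] at hn hm
      have hn' : n < Ks.sum := lt_of_lt_of_le hn (PLE.get_le_sum Ks i)
      have hm' : m < Ks.sum := lt_of_lt_of_le hm (PLE.get_le_sum Ks i)
      simp only at hnm
      rw [dif_pos hn', dif_pos hm'] at hnm
      refine hfadj (u := (i, ⟨ℓ, hℓ⟩, ⟨n, hn'⟩)) (w := (i, ⟨ℓ, hℓ⟩, ⟨m, hm'⟩)) ?_ hnm
      exact Or.inr ⟨rfl, rfl, by simpa [Fin.ext_iff] using hne2, hn, hm⟩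
    calc Ks.get i = (Finset.range (Ks.get i)).card := (Finset.card_range _).symm
      _ ≤ (ℓ ∩ U i).card := Finset.card_le_card_of_injOn _ hmaps hinj
  -- the counting argument
  set uu : Fin Ks.length → Fin Ks'.length → ℕ :=
    fun i j => (PLE.Cgrp Ks' j ∩ U i).card with huu
  have hult : ∀ i j, uu i j ≤ 2 * Ks'.get j := by
    intro i j
    simp only [huu]
    rw [← PLE.cgrp_card Ks' j]
    exact Finset.card_le_card (Finset.inter_subset_left)
  have hbad : ∀ i : Fin Ks.length, Ks.get i ≤ ∑ j, (uu i j - Ks'.get j) := by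
    intro i
    have hBex : ∀ j : Fin Ks'.length, ∃ B : Finset ℕ, B ⊆ PLE.Cgrp Ks' j ∧
        B.card = Ks'.get j ∧ (B ∩ U i).card ≤ uu i j - Ks'.get j := by
      intro j
      have hAcard : (PLE.Cgrp Ks' j \ U i).card + uu i j = (PLE.Cgrp Ks' j).card := by
        simpa only [huu] using Finset.card_sdiff_add_card_inter (PLE.Cgrp Ks' j) (U i)
      rcases le_or_gt (Ks'.get j) ((PLE.Cgrp Ks' j \ U i).card) with hle | hlt
      · obtain ⟨B, hB, hBcard⟩ := Finset.exists_subset_card_eq hle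
        refine ⟨B, hB.trans (Finset.sdiff_subset), hBcard, ?_⟩
        have hemp : B ∩ U i = ∅ := by
          rw [Finset.eq_empty_iff_forall_notMem]
          intro x hx
          rw [Finset.mem_inter] at hx
          exact (Finset.mem_sdiff.mp (hB hx.1)).2 hx.2
        simp [hemp]
      · obtain ⟨B, hAB, hBsub, hBcard⟩ := Finset.exists_subsuperset_card_eq
          (Finset.sdiff_subset) hlt.le (by rw [PLE.cgrp_card]; omega)
        refine ⟨B, hBsub, hBcard, ?_⟩
        have h1 : B ∩ U i ⊆ B \ (PLE.Cgrp Ks' j \ U i) := by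
          intro x hx
          rw [Finset.mem_inter] at hx
          exact Finset.mem_sdiff.mpr ⟨hx.1, fun hxa => (Finset.mem_sdiff.mp hxa).2 hx.2⟩
        have h2 := Finset.card_le_card h1
        rw [Finset.card_sdiff_of_subset hAB, hBcard] at h2
        rw [PLE.cgrp_card] at hAcard
        omega
    choose B hB1 hB2 hB3 using hBex
    obtain ⟨hshape, -⟩ := PLE.shape_of_parts Ks' B hB1 hB2
    have h1 := hkey i _ hshape
    have h2 : (Finset.univ.biUnion B) ∩ U i = Finset.univ.biUnion (fun j => B j ∩ U i) :=
      Finset.biUnion_inter _ _ _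
    calc Ks.get i ≤ ((Finset.univ.biUnion B) ∩ U i).card := h1
      _ = (Finset.univ.biUnion fun j => B j ∩ U i).card := by rw [h2]
      _ ≤ ∑ j, (B j ∩ U i).card := Finset.card_biUnion_le
      _ ≤ ∑ j, (uu i j - Ks'.get j) := Finset.sum_le_sum (fun j _ => hB3 j)
  set owner : Fin Ks'.length → Fin Ks.length := fun j =>
    if hj : ∃ i, 0 < uu i j - Ks'.get j then hj.choose else ⟨0, hqpos⟩ with howner
  have huniq : ∀ i j, 0 < uu i j - Ks'.get j → owner j = i := by
    intro i j hij
    have hj : ∃ i, 0 < uu i j - Ks'.get j := ⟨i, hij⟩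
    have hspec := hj.choose_spec
    have howj : owner j = hj.choose := by simp only [howner]; rw [dif_pos hj]
    rw [howj]
    by_contra hne2
    have hdisj2 : Disjoint (PLE.Cgrp Ks' j ∩ U hj.choose) (PLE.Cgrp Ks' j ∩ U i) :=
      (hUdisj hne2).mono (Finset.inter_subset_right) (Finset.inter_subset_right)
    have hcup : (PLE.Cgrp Ks' j ∩ U hj.choose) ∪ (PLE.Cgrp Ks' j ∩ U i) ⊆ PLE.Cgrp Ks' j :=
      Finset.union_subset (Finset.inter_subset_left) (Finset.inter_subset_left)
    have hcard := Finset.card_le_card hcup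
    rw [Finset.card_union_of_disjoint hdisj2, PLE.cgrp_card] at hcard
    have e1 : (PLE.Cgrp Ks' j ∩ U hj.choose).card = uu hj.choose j := rfl
    have e2 : (PLE.Cgrp Ks' j ∩ U i).card = uu i j := rfl
    rw [e1, e2] at hcard
    omega
  set m : Fin Ks.length → Multiset ℕ :=
    fun i => ((Finset.univ.filter (fun j => owner j = i)).val).map Ks'.get with hm
  have hmsum : ∀ i, (m i).sum = ∑ j ∈ Finset.univ.filter (fun j => owner j = i), Ks'.get j := by
    intro i
    simp only [hm]
    rw [Finset.sum_eq_multiset_sum]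
  have hmge : ∀ i, Ks.get i ≤ (m i).sum := by
    intro i
    rw [hmsum]
    have hz : ∀ j ∈ Finset.univ.filter (fun j => ¬ owner j = i), uu i j - Ks'.get j = 0 := by
      intro j hj
      rw [Finset.mem_filter] at hj
      by_contra hnz
      exact hj.2 (huniq i j (Nat.pos_of_ne_zero hnz))
    calc Ks.get i ≤ ∑ j, (uu i j - Ks'.get j) := hbad i
      _ = ∑ j ∈ Finset.univ.filter (fun j => owner j = i), (uu i j - Ks'.get j)
          + ∑ j ∈ Finset.univ.filter (fun j => ¬ owner j = i), (uu i j - Ks'.get j) :=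
          (Finset.sum_filter_add_sum_filter_not _ _ _).symm
      _ = ∑ j ∈ Finset.univ.filter (fun j => owner j = i), (uu i j - Ks'.get j) := by
          rw [Finset.sum_eq_zero hz, add_zero]
      _ ≤ ∑ j ∈ Finset.univ.filter (fun j => owner j = i), Ks'.get j := by
          refine Finset.sum_le_sum (fun j _ => ?_)
          have := hult i j
          omega
  refine ⟨Finset.univ.val.map (fun i : Fin Ks.length => (m i).sum), ?_, ?_⟩
  · have hlameq : lam = Finset.univ.val.map (fun i : Fin Ks.length => Ks.get i) := by
      rw [Fin.univ_val_map, List.ofFn_get, hKscoe]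
    rw [hlameq, Multiset.rel_map]
    exact Multiset.rel_refl_of_refl_on (fun i _ => hmge i)
  · refine ⟨Finset.univ.val.map m, ?_, ?_, ?_⟩
    · rw [Multiset.map_map]
      rfl
    · show Multiset.join _ = lam'
      have hj1 : Multiset.join (Finset.univ.val.map m) = ∑ i, m i := by
        rw [Finset.sum_eq_multiset_sum]
        rfl
      rw [hj1]
      have hmi : ∀ i, m i = ∑ j ∈ Finset.univ.filter (fun j => owner j = i),
          ({Ks'.get j} : Multiset ℕ) := by
        intro i
        simp only [hm]
        rw [PLE.map_val_eq_sum_singleton]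
      calc (∑ i, m i)
          = ∑ i, ∑ j ∈ Finset.univ.filter (fun j => owner j = i),
              ({Ks'.get j} : Multiset ℕ) := by
            exact Finset.sum_congr rfl (fun i _ => hmi i)
        _ = ∑ j, ({Ks'.get j} : Multiset ℕ) :=
            Finset.sum_fiberwise_of_maps_to (fun j _ => Finset.mem_univ (owner j)) _
        _ = lam' := by
            rw [← PLE.map_val_eq_sum_singleton, Fin.univ_val_map, List.ofFn_get, hKs'coe]
    · intro m' hm' a ha
      rw [Multiset.mem_map] at hm'
      obtain ⟨i, -, rfl⟩ := hm'
      simp only [hm, Multiset.mem_map] at ha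
      obtain ⟨j, -, rfl⟩ := ha
      exact hKs'pos _ (Ks'.get_mem j)
end

section
/- Let λ = {k_1,…,k_q} be a partition of k and let λ'' = {k''_1,…,k''_q} be a partition of k'' with k''_i ≥ k_i for every i (that is, λ'' is obtained from λ by increasing some parts of λ). Then every λ-choosable finite simple graph is λ''-choosable. -/
/-- `lam` is a partition of `k`: a finite multiset of positive integers summing to `k`. -/

lemma rel_exists_list {α β : Type*} (r : α → β → Prop) :
    ∀ (l : List α) (m : Multiset β), Multiset.Rel r (↑l) m →
      ∃ l' : List β, List.Forall₂ r l l' ∧ (↑l' : Multiset β) = m := by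
  intro l
  induction l with
  | nil => intro m hm; rw [Multiset.coe_nil, Multiset.rel_zero_left] at hm
           exact ⟨[], List.Forall₂.nil, hm.symm ▸ rfl⟩
  | cons a l ih =>
    intro m hm
    rw [show ((↑(a :: l) : Multiset α) = a ::ₘ ↑l) from rfl, Multiset.rel_cons_left] at hm
    obtain ⟨b, bs, hab, hrel, rfl⟩ := hm
    obtain ⟨l', h1, h2⟩ := ih bs hrel
    exact ⟨b :: l', List.Forall₂.cons hab h1, by rw [← h2]; rfl⟩

/-- Let `lam = {ks 0, …, ks (q-1)}` be a partition of `k` and `lam'' = {ks'' 0, …, ks'' (q-1)}`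
a partition of `k''` with `ks'' i ≥ ks i` for every `i` (i.e. `lam''` is obtained from `lam`
by increasing some parts). Then every `lam`-choosable finite simple graph is
`lam''`-choosable. -/
theorem lamChoosable_of_increasing_parts (q k k'' : ℕ) (ks ks'' : Fin q → ℕ)
    (hpos : ∀ i, 0 < ks i) (hpos'' : ∀ i, 0 < ks'' i) (hge : ∀ i, ks i ≤ ks'' i)
    (hk : (List.ofFn ks).sum = k) (hk'' : (List.ofFn ks'').sum = k'')
    {V : Type*} [Fintype V] (G : SimpleGraph V)
    (h : LamChoosable (↑(List.ofFn ks)) G) :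
    LamChoosable (↑(List.ofFn ks'')) G := by
  classical
  intro L hL
  obtain ⟨hcard, q', ks2, Cs, hks2, hdisj, hcover, hcount⟩ := hL
  -- a relation between the parts of ks'' (as ks2) and ks
  have hrel0 : Multiset.Rel (· ≤ ·) (↑(List.ofFn ks) : Multiset ℕ) (↑(List.ofFn ks'') : Multiset ℕ) := by
    rw [List.ofFn_eq_map, List.ofFn_eq_map, ← Multiset.map_coe, ← Multiset.map_coe]
    rw [Multiset.rel_map]
    exact Multiset.rel_refl_of_refl_on (fun i _ => hge i)
  have hrel : Multiset.Rel (flip (· ≤ ·)) (↑(List.ofFn ks2) : Multiset ℕ) (↑(List.ofFn ks) : Multiset ℕ) := by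
    rw [hks2]
    exact Multiset.rel_flip.mpr hrel0
  obtain ⟨l', hf2, hl'⟩ := rel_exists_list _ (List.ofFn ks2) _ hrel
  have hlen := List.Forall₂.length_eq hf2
  rw [List.length_ofFn] at hlen
  set g : Fin q' → ℕ := fun i => l'.get ⟨i.1, by omega⟩ with hg
  have hg_le : ∀ i, g i ≤ ks2 i := by
    intro i
    have := (List.forall₂_iff_get.mp hf2).2 i.1 (by simp) (by omega)
    simpa [flip, List.get_ofFn, hg] using this
  have hg_list : List.ofFn g = l' := by
    apply List.ext_get (by simp [hlen])
    intro n h1 h2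
    simp [hg, List.get_ofFn]
  have hg_ms : (↑(List.ofFn g) : Multiset ℕ) = ↑(List.ofFn ks) := by
    rw [hg_list, hl']
  -- choose shrunken lists
  choose S hSsub hScard using fun v i =>
    Finset.exists_subset_card_eq (s := L v ∩ Cs i) (n := g i) (by rw [hcount]; exact hg_le i)
  have hSC : ∀ v i, S v i ⊆ Cs i := fun v i =>
    (hSsub v i).trans Finset.inter_subset_right
  have hSL : ∀ v i, S v i ⊆ L v := fun v i =>
    (hSsub v i).trans Finset.inter_subset_left
  set L' : V → Finset ℕ := fun v => Finset.univ.biUnion (S v) with hL'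
  set U : Finset ℕ := Finset.univ.biUnion L' with hU
  have hL'U : ∀ v, L' v ⊆ U := fun v =>
    Finset.subset_biUnion_of_mem L' (Finset.mem_univ v)
  have hL'L : ∀ v, L' v ⊆ L v := by
    intro v c hc
    obtain ⟨i, _, hi⟩ := Finset.mem_biUnion.mp hc
    exact hSL v i hi
  have hkey : ∀ v i, L' v ∩ Cs i = S v i := by
    intro v i
    ext c
    simp only [Finset.mem_inter, hL', Finset.mem_biUnion, Finset.mem_univ, true_and]
    constructor
    · rintro ⟨⟨j, hj⟩, hci⟩
      rcases eq_or_ne j i with rfl | hne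
      · exact hj
      · exact absurd hci (Finset.disjoint_left.mp (hdisj hne) (hSC v j hj))
    · intro hc
      exact ⟨⟨i, hc⟩, hSC v i hc⟩
  have hassign : (∀ v, (L' v).card = (↑(List.ofFn ks) : Multiset ℕ).sum) ∧
      ∃ (q0 : ℕ) (ks0 : Fin q0 → ℕ) (Cs0 : Fin q0 → Finset ℕ),
        (↑(List.ofFn ks0) : Multiset ℕ) = ↑(List.ofFn ks) ∧
        (Pairwise fun i j => Disjoint (Cs0 i) (Cs0 j)) ∧
        (∀ c : ℕ, (∃ v, c ∈ L' v) ↔ ∃ i, c ∈ Cs0 i) ∧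
        ∀ v i, ((L' v) ∩ Cs0 i).card = ks0 i := by
    constructor
    · intro v
      rw [← hg_ms]
      have hcards : (L' v).card = ∑ i, (S v i).card := by
        apply Finset.card_biUnion
        intro i _ j _ hne
        exact (hdisj hne).mono (hSC v i) (hSC v j)
      rw [hcards]
      simp only [hScard]
      rw [Multiset.sum_coe, List.sum_ofFn]
    · refine ⟨q', g, fun i => Cs i ∩ U, hg_ms, ?_, ?_, ?_⟩
      · intro i j hne
        exact (hdisj hne).mono Finset.inter_subset_left Finset.inter_subset_left
      · intro c
        constructor
        · rintro ⟨v, hv⟩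
          have hcU : c ∈ U := hL'U v hv
          obtain ⟨i, _, hi⟩ := Finset.mem_biUnion.mp hv
          exact ⟨i, Finset.mem_inter.mpr ⟨hSC v i hi, hcU⟩⟩
        · rintro ⟨i, hc⟩
          obtain ⟨v, _, hv⟩ := Finset.mem_biUnion.mp (Finset.mem_inter.mp hc).2
          exact ⟨v, hv⟩
      · intro v i
        have : L' v ∩ (Cs i ∩ U) = S v i := by
          rw [← Finset.inter_assoc, hkey]
          exact Finset.inter_eq_left.mpr
            ((Finset.subset_biUnion_of_mem (S v) (Finset.mem_univ i)).trans (hL'U v))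
        rw [this, hScard]
  obtain ⟨f, hf1, hf2'⟩ := h L' hassign
  exact ⟨f, fun v => hL'L v (hf1 v), hf2'⟩
end

section
/- Fix positive integers k, g with g ≥ 3 and a real ε with 0 < ε < 1/(4g). Let F be the complete k-partite graph with partite sets V_1,…,V_k, each of size n, let q = k(k−1)/2, m = ⌊q·n^{1+2ε}⌋, and let 𝒢 be the set of all spanning subgraphs of F with exactly m edges. If n is large enough that n^ε > (g−3)·k^{g−1}, then the total number, summed over all G ∈ 𝒢, of cycles of length at most g−1 in G is less than n^{−ε}·n^{2gε}·|𝒢|. Consequently, the number of graphs G ∈ 𝒢 containing more than n^{2gε} cycles of length at most g−1 is less than n^{−ε}·|𝒢|. -/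
/-- The number of cycles of length at most `b` in `G`: a cycle is identified with its edge
set, so each cycle is counted exactly once. -/
noncomputable def cycleCount {V : Type*} (G : SimpleGraph V) (b : ℕ) : ℕ :=
  Set.ncard {C : Set (Sym2 V) |
    ∃ (v : V) (w : G.Walk v v), w.IsCycle ∧ w.length ≤ b ∧ {e | e ∈ w.edges} = C}

/-- The edge set of the complete `k`-partite graph on `Fin k × Fin n` whose parts are the
fibres of the first projection: the edges are exactly the pairs of vertices with distinct
first coordinates. -/
def kpartEdges (k n : ℕ) : Finset (Sym2 (Fin k × Fin n)) :=
  Finset.univ.filter fun e => ¬ (e.map Prod.fst).IsDiag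

open Finset SimpleGraph



lemma aux_descFactorial_mul_pow_le {m N : ℕ} (h : m ≤ N) :
    ∀ ℓ : ℕ, m.descFactorial ℓ * N ^ ℓ ≤ N.descFactorial ℓ * m ^ ℓ := by
  intro ℓ
  induction ℓ with
  | zero => simp
  | succ ℓ ih =>
    have h1 : (m - ℓ) * N ≤ (N - ℓ) * m := by
      rcases le_or_gt ℓ m with h' | h'
      · calc (m - ℓ) * N = m * N - ℓ * N := by rw [Nat.sub_mul]
          _ ≤ N * m - ℓ * m := by
              rw [Nat.mul_comm m N]
              exact Nat.sub_le_sub_left (Nat.mul_le_mul_left ℓ h) _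
          _ = (N - ℓ) * m := by rw [Nat.sub_mul]
      · simp [Nat.sub_eq_zero_of_le h'.le]
    rw [Nat.descFactorial_succ, Nat.descFactorial_succ, pow_succ, pow_succ]
    calc (m - ℓ) * m.descFactorial ℓ * (N ^ ℓ * N)
        = ((m - ℓ) * N) * (m.descFactorial ℓ * N ^ ℓ) := by ring
      _ ≤ ((N - ℓ) * m) * (N.descFactorial ℓ * m ^ ℓ) := Nat.mul_le_mul h1 ih
      _ = (N - ℓ) * N.descFactorial ℓ * (m ^ ℓ * m) := by ring

lemma aux_choose_mul_pow_le {m N : ℕ} (h : m ≤ N) (ℓ : ℕ) :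
    m.choose ℓ * N ^ ℓ ≤ N.choose ℓ * m ^ ℓ := by
  have hd := aux_descFactorial_mul_pow_le h ℓ
  rw [Nat.descFactorial_eq_factorial_mul_choose, Nat.descFactorial_eq_factorial_mul_choose] at hd
  rw [mul_assoc, mul_assoc] at hd
  exact Nat.le_of_mul_le_mul_left hd (Nat.factorial_pos ℓ)

/-- counting supersets of a fixed set among m-subsets -/
lemma aux_count_supersets {α : Type*} [DecidableEq α] {S C : Finset α} {m : ℕ} (hC : C ⊆ S) :
    ((S.powersetCard m).filter fun E => C ⊆ E).card ≤ (S.card - C.card).choose (m - C.card) := by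
  classical
  have hinj := Finset.card_le_card_of_injOn (fun E => E \ C)
    (s := (S.powersetCard m).filter fun E => C ⊆ E)
    (t := (S \ C).powersetCard (m - C.card)) ?_ ?_
  · calc ((S.powersetCard m).filter fun E => C ⊆ E).card ≤ _ := hinj
      _ = (S \ C).card.choose (m - C.card) := Finset.card_powersetCard _ _
      _ = (S.card - C.card).choose (m - C.card) := by rw [Finset.card_sdiff_of_subset hC]
  · intro E hE
    simp only [Finset.mem_coe, Finset.mem_filter, Finset.mem_powersetCard] at hE ⊢
    obtain ⟨⟨hES, hEcard⟩, hCE⟩ := hE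
    exact ⟨Finset.sdiff_subset_sdiff hES (Finset.Subset.refl C),
      by rw [Finset.card_sdiff_of_subset hCE, hEcard]⟩
  · intro E₁ h₁ E₂ h₂ heq
    simp only [Finset.coe_filter, Set.mem_setOf_eq, Finset.mem_powersetCard] at h₁ h₂
    have e1 : E₁ \ C ∪ C = E₁ := Finset.sdiff_union_of_subset h₁.2
    have e2 : E₂ \ C ∪ C = E₂ := Finset.sdiff_union_of_subset h₂.2
    change E₁ \ C = E₂ \ C at heq
    rw [← e1, ← e2, heq]

lemma aux_kpartEdges_card_ge (k n : ℕ) :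
    k * (k - 1) / 2 * n ^ 2 ≤ (kpartEdges k n).card := by
  classical
  have hinj := Finset.card_le_card_of_injOn
    (fun x : (Σ _ : Fin k, Fin k) × (Fin n × Fin n) =>
      Sym2.mk (x.1.2, x.2.1) (x.1.1, x.2.2))
    (s := ((Finset.univ : Finset (Fin k)).sigma fun j => Finset.Iio j) ×ˢ
      (Finset.univ : Finset (Fin n × Fin n)))
    (t := kpartEdges k n) ?_ ?_
  · refine le_trans (le_of_eq ?_) hinj
    rw [Finset.card_product, Finset.card_sigma]
    have h1 : ∑ j : Fin k, (Finset.Iio j).card = k * (k - 1) / 2 := by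
      simp only [Fin.card_Iio]
      rw [Fin.sum_univ_eq_sum_range (fun i => i) k]
      exact Finset.sum_range_id k
    rw [h1]
    congr 1
    rw [Finset.card_univ, Fintype.card_prod, Fintype.card_fin, sq]
  · rintro ⟨⟨j, i⟩, a, b⟩ hx
    simp only [Finset.mem_coe, Finset.mem_product, Finset.mem_sigma, Finset.mem_Iio] at hx
    obtain ⟨⟨-, hij⟩, -⟩ := hx
    simp only [kpartEdges, Finset.mem_coe, Finset.mem_filter, Finset.mem_univ, true_and]
    rw [Sym2.map_pair_eq, Sym2.mk_isDiag_iff]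
    simp only [not_false_eq_true]
    exact fun hcon => absurd hcon (Fin.ne_of_lt hij)
  · rintro ⟨⟨j₁, i₁⟩, a₁, b₁⟩ h₁ ⟨⟨j₂, i₂⟩, a₂, b₂⟩ h₂ heq
    simp only [Finset.coe_product, Set.mem_prod, Finset.mem_coe, Finset.mem_sigma,
      Finset.mem_Iio, Finset.mem_univ, and_true, true_and] at h₁ h₂
    simp only [Sym2.eq_iff, Prod.mk.injEq] at heq
    rcases heq with ⟨⟨hi, ha⟩, hj, hb⟩ | ⟨⟨hij, -⟩, hji, -⟩
    · subst hi; subst ha; subst hj; subst hb; rfl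
    · exfalso
      rw [← hji] at h₂
      rw [← hij] at h₂
      exact absurd h₂ (lt_asymm h₁)


/-- A walk's edges are determined by its support. -/
lemma aux_edges_eq_of_support_eq {V : Type*} {G H : SimpleGraph V} :
    ∀ {a b : V} (p : G.Walk a b) {c d : V} (q : H.Walk c d),
      p.support = q.support → p.edges = q.edges := by
  intro a b p
  induction p with
  | nil =>
    intro c d q hq
    cases q with
    | nil => simp
    | cons h' q' =>
      have := congrArg List.length hq
      simp [SimpleGraph.Walk.length_support] at this
  | cons h p' ih =>
    intro c d q hq
    cases q with
    | nil =>
      have := congrArg List.length hq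
      simp [SimpleGraph.Walk.length_support] at this
    | cons h' q' =>
      rw [SimpleGraph.Walk.support_cons, SimpleGraph.Walk.support_cons] at hq
      simp only [List.cons.injEq] at hq
      obtain ⟨rfl, hs⟩ := hq
      have h1 := hs
      rw [p'.support_eq_cons, q'.support_eq_cons] at h1
      simp only [List.cons.injEq] at h1
      obtain ⟨hxy, -⟩ := h1
      subst hxy
      rw [SimpleGraph.Walk.edges_cons, SimpleGraph.Walk.edges_cons, ih q' hs]

lemma aux_support_getLast? {V : Type*} {G : SimpleGraph V} :
    ∀ {u v : V} (p : G.Walk u v), p.support.getLast? = some v := by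
  intro u v p
  induction p with
  | nil => simp
  | cons h p' ih =>
    rw [SimpleGraph.Walk.support_cons, p'.support_eq_cons, List.getLast?_cons_cons,
      ← p'.support_eq_cons]
    exact ih

lemma aux_support_tail_getLast? {V : Type*} {G : SimpleGraph V} {v : V}
    (w : G.Walk v v) (hw : w.support.tail ≠ []) : w.support.tail.getLast? = some v := by
  have h0 := aux_support_getLast? w
  rw [w.support_eq_cons] at h0
  cases htail : w.support.tail with
  | nil => exact absurd htail hw
  | cons x xs =>
    rw [htail] at h0
    rw [List.getLast?_cons_cons] at h0
    exact h0


/-- Each cycle (counted by edge set) of `fromEdgeSet E` gives an element of a collection `T`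
that contains all short-cycle edge sets contained in `E`. -/
lemma aux_cycleCount_le_card {V : Type*} [Fintype V] (b : ℕ) (E : Finset (Sym2 V))
    (T : Finset (Finset (Sym2 V)))
    (hT : ∀ C : Finset (Sym2 V), (∃ (v : V) (w : (⊤ : SimpleGraph V).Walk v v),
      w.IsCycle ∧ w.length ≤ b ∧ ∀ e, e ∈ C ↔ e ∈ w.edges) → C ⊆ E → C ∈ T) :
    cycleCount (SimpleGraph.fromEdgeSet (↑E : Set (Sym2 V))) b ≤ T.card := by
  classical
  rw [cycleCount, ← Set.ncard_coe_finset]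
  apply Set.ncard_le_ncard_of_injOn (fun C => (Set.toFinite C).toFinset)
  · rintro C ⟨v, w, hcyc, hlen, hC⟩
    have hedge : ∀ e ∈ w.edges, e ∈ E := by
      intro e he
      have h1 := w.edges_subset_edgeSet he
      rw [SimpleGraph.edgeSet_fromEdgeSet] at h1
      exact h1.1
    have hedgetop : ∀ e ∈ w.edges, e ∈ (⊤ : SimpleGraph V).edgeSet := fun e he =>
      SimpleGraph.edgeSet_mono le_top (w.edges_subset_edgeSet he)
    have hmem : ∀ e, e ∈ (Set.toFinite C).toFinset ↔ e ∈ w.edges := by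
      intro e
      simp [Set.Finite.mem_toFinset, ← hC]
    show (Set.toFinite C).toFinset ∈ (↑T : Set (Finset (Sym2 V)))
    refine Finset.mem_coe.mpr (hT _ ⟨v, w.transfer ⊤ hedgetop, hcyc.transfer hedgetop,
      ?_, ?_⟩ ?_)
    · rw [SimpleGraph.Walk.length_transfer]; exact hlen
    · intro e
      rw [SimpleGraph.Walk.edges_transfer]
      exact hmem e
    · intro e he
      exact hedge e ((hmem e).mp he)
  · intro C₁ h₁ C₂ h₂ heq
    have := congrArg (fun s : Finset (Sym2 V) => (↑s : Set (Sym2 V))) heq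
    simpa [Set.Finite.coe_toFinset] using this

lemma aux_exists_ofFn {α : Type*} {ℓ : ℕ} (l : List α) (h : l.length = ℓ) :
    ∃ f : Fin ℓ → α, List.ofFn f = l := by
  subst h
  exact ⟨l.get, List.ofFn_get l⟩

lemma aux_support_tail_ne_nil {V : Type*} {G : SimpleGraph V} {v : V} {w : G.Walk v v}
    (hw : w.IsCycle) : w.support.tail ≠ [] := by
  have h1 : w.support.tail.length = w.length := by
    have := SimpleGraph.Walk.length_support w
    have h2 : w.support.tail.length = w.support.length - 1 := by simp
    omega
  intro hcon
  rw [hcon] at h1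
  have := hw.three_le_length
  simp at h1
  omega

open Classical in
lemma aux_card_cycleSets_le {V : Type*} [Fintype V] (ℓ : ℕ) (T : Finset (Finset (Sym2 V)))
    (hT : ∀ C ∈ T, ∃ (v : V) (w : (⊤ : SimpleGraph V).Walk v v),
      w.IsCycle ∧ (∀ e, e ∈ C ↔ e ∈ w.edges) ∧ w.length = ℓ) :
    T.card ≤ Fintype.card V ^ ℓ := by
  classical
  set f : Finset (Sym2 V) → List V := fun C =>
    if h : ∃ p : (v : V) × (⊤ : SimpleGraph V).Walk v v,
        p.2.IsCycle ∧ (∀ e, e ∈ C ↔ e ∈ p.2.edges) ∧ p.2.length = ℓ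
    then h.choose.2.support.tail else [] with hf
  have hex : ∀ C ∈ T, ∃ p : (v : V) × (⊤ : SimpleGraph V).Walk v v,
      p.2.IsCycle ∧ (∀ e, e ∈ C ↔ e ∈ p.2.edges) ∧ p.2.length = ℓ := by
    intro C hC
    obtain ⟨v, w, h1, h2, h3⟩ := hT C hC
    exact ⟨⟨v, w⟩, h1, h2, h3⟩
  have hflen : ∀ C ∈ T, (f C).length = ℓ := by
    intro C hC
    simp only [hf]
    rw [dif_pos (hex C hC)]
    have hspec := (hex C hC).choose_spec
    have := SimpleGraph.Walk.length_support (hex C hC).choose.2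
    have h2 : (hex C hC).choose.2.support.tail.length
        = (hex C hC).choose.2.support.length - 1 := by simp
    omega
  have hb := Finset.card_le_card_of_injOn f (s := T)
    (t := (Finset.univ : Finset (Fin ℓ → V)).image List.ofFn) ?_ ?_
  · refine hb.trans ?_
    refine Finset.card_image_le.trans ?_
    rw [Finset.card_univ]
    simp [Fintype.card_fun]
  · intro C hC
    obtain ⟨g, hg⟩ := aux_exists_ofFn (f C) (hflen C hC)
    exact Finset.mem_image.mpr ⟨g, Finset.mem_univ g, hg⟩
  · intro C₁ h₁ C₂ h₂ heq
    simp only [Finset.mem_coe] at h₁ h₂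
    have hex₁ := hex C₁ h₁
    have hex₂ := hex C₂ h₂
    simp only [hf] at heq
    rw [dif_pos hex₁, dif_pos hex₂] at heq
    obtain ⟨hc₁, he₁, hl₁⟩ := hex₁.choose_spec
    obtain ⟨hc₂, he₂, hl₂⟩ := hex₂.choose_spec
    set w₁ := hex₁.choose.2
    set w₂ := hex₂.choose.2
    have hne₁ : w₁.support.tail ≠ [] := aux_support_tail_ne_nil hc₁
    have hne₂ : w₂.support.tail ≠ [] := aux_support_tail_ne_nil hc₂
    have hv : hex₁.choose.1 = hex₂.choose.1 := by
      have g1 := aux_support_tail_getLast? w₁ hne₁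
      have g2 := aux_support_tail_getLast? w₂ hne₂
      rw [heq] at g1
      rw [g1] at g2
      exact (Option.some.injEq _ _ ▸ g2)
    have hsupp : w₁.support = w₂.support := by
      rw [w₁.support_eq_cons, w₂.support_eq_cons, heq, hv]
    have hedges := aux_edges_eq_of_support_eq w₁ w₂ hsupp
    ext e
    rw [he₁ e, he₂ e, hedges]

set_option maxHeartbeats 1000000 in
open Classical in
/-- Fix `k ≥ 1`, `g ≥ 3` and `0 < ε < 1/(4g)`. Let `F` be the complete `k`-partite graph
with parts of size `n`, `q = k(k-1)/2`, `m = ⌊q·n^(1+2ε)⌋`, and `𝒢` the set of spanning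
subgraphs of `F` with exactly `m` edges (identified with the `m`-subsets of `E(F)`). If `n`
is large enough that `n^ε > (g-3)·k^(g-1)`, then the total number, over all `G ∈ 𝒢`, of
cycles of length at most `g-1` is less than `n^(-ε)·n^(2gε)·|𝒢|`; consequently fewer than
`n^(-ε)·|𝒢|` graphs in `𝒢` have more than `n^(2gε)` cycles of length at most `g-1`. -/
theorem expected_short_cycles (k g n : ℕ) (hk : 0 < k) (hg : 3 ≤ g)
    (ε : ℝ) (hε : 0 < ε) (hεg : ε < 1 / (4 * g))
    (hn : ((g : ℝ) - 3) * (k : ℝ) ^ (g - 1) < (n : ℝ) ^ ε) :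
    ∀ m : ℕ, m = ⌊((k * (k - 1) / 2 : ℕ) : ℝ) * (n : ℝ) ^ ((1 : ℝ) + 2 * ε)⌋₊ →
    ∀ 𝒢 : Finset (Finset (Sym2 (Fin k × Fin n))), 𝒢 = Finset.powersetCard m (kpartEdges k n) →
      (∑ E ∈ 𝒢, (cycleCount (SimpleGraph.fromEdgeSet (↑E : Set (Sym2 (Fin k × Fin n)))) (g - 1) : ℝ))
          < (n : ℝ) ^ (-ε) * (n : ℝ) ^ (2 * (g : ℝ) * ε) * (𝒢.card : ℝ) ∧
      ((𝒢.filter fun E => (n : ℝ) ^ (2 * (g : ℝ) * ε)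
            < (cycleCount (SimpleGraph.fromEdgeSet (↑E : Set (Sym2 (Fin k × Fin n)))) (g - 1) : ℝ)).card : ℝ)
          < (n : ℝ) ^ (-ε) * (𝒢.card : ℝ) := by
  classical
  intro m hm 𝒢 h𝒢
  subst h𝒢
  set S : Finset (Sym2 (Fin k × Fin n)) := kpartEdges k n with hS
  set N : ℕ := S.card with hN
  set q : ℕ := k * (k - 1) / 2 with hq
  have hg3R : (0:ℝ) ≤ (g:ℝ) - 3 := by
    have h3 : (3:ℝ) ≤ (g:ℝ) := by exact_mod_cast hg
    linarith
  have hn1 : 1 ≤ n := by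
    by_contra hcon
    have hn0 : n = 0 := by omega
    rw [hn0] at hn
    rw [Nat.cast_zero, Real.zero_rpow hε.ne'] at hn
    have : (0:ℝ) ≤ ((g:ℝ)-3) * (k:ℝ)^(g-1) := mul_nonneg hg3R (by positivity)
    linarith
  have hn1R : (1:ℝ) ≤ (n:ℝ) := by exact_mod_cast hn1
  have hn0R : (0:ℝ) < (n:ℝ) := by linarith
  have hε2 : ε ≤ 1/2 := by
    have h12 : (12:ℝ) ≤ 4*(g:ℝ) := by
      have h3 : (3:ℝ) ≤ (g:ℝ) := by exact_mod_cast hg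
      linarith
    have h13 : 1/(4*(g:ℝ)) ≤ 1/12 := by
      apply one_div_le_one_div_of_le (by norm_num) h12
    linarith
  have hmq : m ≤ q * n^2 := by
    rw [hm]
    have h1 : ((q:ℕ):ℝ) * (n:ℝ)^((1:ℝ)+2*ε) ≤ ((q * n^2 : ℕ) : ℝ) := by
      have h2 : (n:ℝ)^((1:ℝ)+2*ε) ≤ (n:ℝ)^((2:ℝ)) :=
        Real.rpow_le_rpow_of_exponent_le hn1R (by linarith)
      have h3 : (n:ℝ)^((2:ℝ)) = ((n^2 : ℕ) : ℝ) := by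
        rw [show ((n^2:ℕ):ℝ) = (n:ℝ)^(2:ℕ) by push_cast; ring, ← Real.rpow_natCast (n:ℝ) 2]
        norm_num
      push_cast
      calc (q:ℝ) * (n:ℝ)^((1:ℝ)+2*ε) ≤ (q:ℝ) * (n:ℝ)^((2:ℝ)) :=
            mul_le_mul_of_nonneg_left h2 (by positivity)
        _ = (q:ℝ) * (n:ℝ)^(2:ℕ) := by rw [h3]; push_cast; ring
    calc ⌊((q:ℕ):ℝ) * (n:ℝ)^((1:ℝ)+2*ε)⌋₊ ≤ ⌊((q * n^2 : ℕ) : ℝ)⌋₊ := Nat.floor_le_floor h1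
      _ = q*n^2 := Nat.floor_natCast _
  have hqN : q * n^2 ≤ N := aux_kpartEdges_card_ge k n
  have hmN : m ≤ N := hmq.trans hqN
  have h𝒢card : (Finset.powersetCard m S).card = N.choose m := Finset.card_powersetCard m S
  have h𝒢pos : 0 < N.choose m := Nat.choose_pos hmN
  set 𝒯 : Finset (Finset (Sym2 (Fin k × Fin n))) :=
    S.powerset.filter (fun C => ∃ (v : Fin k × Fin n)
      (w : (⊤ : SimpleGraph (Fin k × Fin n)).Walk v v),
      w.IsCycle ∧ w.length ≤ g - 1 ∧ w.edges.toFinset = C) with h𝒯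
  have hstep1 : ∀ E ∈ Finset.powersetCard m S,
      cycleCount (SimpleGraph.fromEdgeSet (↑E : Set (Sym2 (Fin k × Fin n)))) (g-1)
        ≤ (𝒯.filter fun C => C ⊆ E).card := by
    intro E hE
    have hES : E ⊆ S := (Finset.mem_powersetCard.mp hE).1
    refine aux_cycleCount_le_card (g-1) E _ ?_
    intro C hcyc hsub
    rw [Finset.mem_filter, h𝒯, Finset.mem_filter]
    obtain ⟨v, w, h1, h2, h3⟩ := hcyc
    refine ⟨⟨Finset.mem_powerset.mpr (hsub.trans hES), v, w, h1, h2, ?_⟩, hsub⟩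
    ext e
    rw [List.mem_toFinset]
    exact (h3 e).symm
  have hswap : ∑ E ∈ Finset.powersetCard m S, (𝒯.filter fun C => C ⊆ E).card
      = ∑ C ∈ 𝒯, ((Finset.powersetCard m S).filter fun E => C ⊆ E).card := by
    simp_rw [Finset.card_filter]
    exact Finset.sum_comm
  have hsum : (∑ E ∈ Finset.powersetCard m S,
      cycleCount (SimpleGraph.fromEdgeSet (↑E : Set (Sym2 (Fin k × Fin n)))) (g-1))
      ≤ ∑ C ∈ 𝒯, (N - C.card).choose (m - C.card) := by
    refine le_trans (Finset.sum_le_sum hstep1) ?_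
    rw [hswap]
    refine Finset.sum_le_sum (fun C hC => ?_)
    exact aux_count_supersets (Finset.mem_powerset.mp (Finset.mem_filter.mp hC).1)
  have hB0 : (0:ℝ) < (n:ℝ) ^ (2*(g:ℝ)*ε) := Real.rpow_pos_of_pos hn0R _
  have hA0 : (0:ℝ) < (n:ℝ) ^ (-ε) := Real.rpow_pos_of_pos hn0R _
  have hK0 : (0:ℝ) < ((Finset.powersetCard m S).card : ℝ) := by
    rw [h𝒢card]; exact_mod_cast h𝒢pos
  have hpart1 : (∑ E ∈ Finset.powersetCard m S,
      (cycleCount (SimpleGraph.fromEdgeSet (↑E : Set (Sym2 (Fin k × Fin n)))) (g - 1) : ℝ))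
      < (n : ℝ) ^ (-ε) * (n : ℝ) ^ (2 * (g : ℝ) * ε)
        * ((Finset.powersetCard m S).card : ℝ) := by
    have hcast : (∑ E ∈ Finset.powersetCard m S,
        (cycleCount (SimpleGraph.fromEdgeSet (↑E : Set (Sym2 (Fin k × Fin n)))) (g - 1) : ℝ))
        = ((∑ E ∈ Finset.powersetCard m S,
          cycleCount (SimpleGraph.fromEdgeSet (↑E : Set (Sym2 (Fin k × Fin n)))) (g-1) : ℕ) : ℝ) := by
      push_cast
      rfl
    by_cases hcase : 4 ≤ g ∧ 2 ≤ k
    · obtain ⟨hg4, hk2⟩ := hcase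
      have hq1 : 1 ≤ q := by
        have h2 : 2 * 1 ≤ k * (k - 1) := Nat.mul_le_mul hk2 (by omega)
        have h3 : 2/2 ≤ k * (k-1)/2 := Nat.div_le_div_right (by omega)
        simpa using h3
      have hN1 : 1 ≤ N := le_trans (Nat.mul_le_mul hq1 (Nat.one_le_pow _ _ hn1)) hqN
      have hgn : (g:ℝ) - 1 < (n:ℝ) := by
        have h2p : (g:ℝ) ≤ 2^(g-1) := by
          have := Nat.lt_two_pow_self (n := g-1)
          have h4 : g ≤ 2^(g-1) := by omega
          exact_mod_cast h4
        have hk2R : (2:ℝ)^(g-1) ≤ (k:ℝ)^(g-1) :=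
          pow_le_pow_left₀ (by norm_num) (by exact_mod_cast hk2) _
        have hg31 : (1:ℝ) ≤ (g:ℝ) - 3 := by
          have h4 : (4:ℝ) ≤ (g:ℝ) := by exact_mod_cast hg4
          linarith
        have hkpos : (0:ℝ) ≤ (k:ℝ)^(g-1) := by positivity
        calc (g:ℝ) - 1 < (g:ℝ) := by linarith
          _ ≤ (2:ℝ)^(g-1) := h2p
          _ ≤ (k:ℝ)^(g-1) := hk2R
          _ ≤ ((g:ℝ)-3) * (k:ℝ)^(g-1) := by nlinarith
          _ < (n:ℝ)^ε := hn
          _ ≤ (n:ℝ)^(1:ℝ) := Real.rpow_le_rpow_of_exponent_le hn1R (by linarith)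
          _ = (n:ℝ) := Real.rpow_one _
      have hg1n : g - 1 ≤ n := by
        have h5 : (g:ℝ) < (n:ℝ) + 1 := by linarith
        have h6 : g < n + 1 := by exact_mod_cast h5
        omega
      have hnm : n ≤ m := by
        rw [hm]
        apply Nat.le_floor
        have h2 : (n:ℝ)^(1:ℝ) ≤ (n:ℝ)^((1:ℝ)+2*ε) :=
          Real.rpow_le_rpow_of_exponent_le hn1R (by linarith)
        have h3 : (1:ℝ) ≤ ((q:ℕ):ℝ) := by exact_mod_cast hq1
        calc ((n:ℕ):ℝ) = (n:ℝ)^(1:ℝ) := (Real.rpow_one _).symm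
          _ ≤ (n:ℝ)^((1:ℝ)+2*ε) := h2
          _ ≤ ((q:ℕ):ℝ) * (n:ℝ)^((1:ℝ)+2*ε) := le_mul_of_one_le_left (by positivity) h3
      have hgm : g - 1 ≤ m := le_trans hg1n hnm
      have hcard𝒯 : ∀ C ∈ 𝒯, C.card ∈ Finset.Icc 3 (g-1) := by
        intro C hC
        rw [h𝒯, Finset.mem_filter] at hC
        obtain ⟨-, v, w, hcyc, hlen, hCw⟩ := hC
        have hcc : C.card = w.length := by
          rw [← hCw, List.toFinset_card_of_nodup hcyc.edges_nodup,
            SimpleGraph.Walk.length_edges]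
        rw [Finset.mem_Icc, hcc]
        exact ⟨hcyc.three_le_length, hlen⟩
      have hgroup : ∑ C ∈ 𝒯, (N - C.card).choose (m - C.card)
          = ∑ ℓ ∈ Finset.Icc 3 (g-1), ∑ C ∈ 𝒯.filter (fun C => C.card = ℓ),
            (N - C.card).choose (m - C.card) :=
        (Finset.sum_fiberwise_of_maps_to hcard𝒯 _).symm
      have hinner : ∀ ℓ ∈ Finset.Icc 3 (g-1),
          (∑ C ∈ 𝒯.filter (fun C => C.card = ℓ), (N - C.card).choose (m - C.card))
            ≤ (k*n)^ℓ * (N - ℓ).choose (m - ℓ) := by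
        intro ℓ hℓ
        have h1 : ∀ C ∈ 𝒯.filter (fun C => C.card = ℓ),
            (N - C.card).choose (m - C.card) = (N-ℓ).choose (m-ℓ) := by
          intro C hC
          rw [(Finset.mem_filter.mp hC).2]
        rw [Finset.sum_congr rfl h1, Finset.sum_const, smul_eq_mul]
        apply Nat.mul_le_mul_right
        have hfib := aux_card_cycleSets_le ℓ (𝒯.filter fun C => C.card = ℓ) ?_
        · simpa [Fintype.card_prod] using hfib
        · intro C hC
          rw [Finset.mem_filter, h𝒯, Finset.mem_filter] at hC
          obtain ⟨⟨-, v, w, hcyc, hlen, hCw⟩, hcard⟩ := hC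
          refine ⟨v, w, hcyc, ?_, ?_⟩
          · intro e
            rw [← hCw, List.mem_toFinset]
          · rw [← hcard, ← hCw, List.toFinset_card_of_nodup hcyc.edges_nodup,
              SimpleGraph.Walk.length_edges]
      have hnat : (∑ E ∈ Finset.powersetCard m S,
          cycleCount (SimpleGraph.fromEdgeSet (↑E : Set (Sym2 (Fin k × Fin n)))) (g-1))
          ≤ ∑ ℓ ∈ Finset.Icc 3 (g-1), (k*n)^ℓ * (N-ℓ).choose (m-ℓ) :=
        hsum.trans (by rw [hgroup]; exact Finset.sum_le_sum hinner)
      have hper : ∀ ℓ ∈ Finset.Icc 3 (g-1),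
          (((k*n)^ℓ * (N-ℓ).choose (m-ℓ) : ℕ) : ℝ)
            ≤ (k:ℝ)^(g-1) * (n:ℝ)^(2*ε*((g:ℝ)-1)) * (N.choose m : ℝ) := by
        intro ℓ hℓ
        rw [Finset.mem_Icc] at hℓ
        obtain ⟨hℓ3, hℓg⟩ := hℓ
        have hℓm : ℓ ≤ m := hℓg.trans hgm
        have hℓN : ℓ ≤ N := hℓm.trans hmN
        have haR : (0:ℝ) < (N.choose ℓ : ℝ) := by exact_mod_cast Nat.choose_pos hℓN
        have hNR : (0:ℝ) < (N:ℝ) := by exact_mod_cast hN1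
        have hidN : N.choose ℓ * ((N-ℓ).choose (m-ℓ)) = N.choose m * m.choose ℓ :=
          (Nat.choose_mul (n := N) hℓm).symm
        have hid : ((N-ℓ).choose (m-ℓ) : ℝ) * (N.choose ℓ : ℝ)
            = (N.choose m : ℝ) * (m.choose ℓ : ℝ) := by
          exact_mod_cast (mul_comm ((N-ℓ).choose (m-ℓ)) (N.choose ℓ)).trans hidN
        have hkey2 : (m.choose ℓ : ℝ) * (N:ℝ)^ℓ ≤ (N.choose ℓ : ℝ) * (m:ℝ)^ℓ := by
          exact_mod_cast aux_choose_mul_pow_le hmN ℓ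
        have hmle : (m:ℝ) ≤ ((q:ℕ):ℝ) * (n:ℝ)^((1:ℝ)+2*ε) := by
          rw [hm]; exact Nat.floor_le (by positivity)
        have hkey3 : ((k:ℝ)*(n:ℝ)) * (m:ℝ) ≤ (N:ℝ) * ((k:ℝ) * (n:ℝ)^(2*ε)) := by
          have hqn2 : ((q:ℕ):ℝ) * (n:ℝ)^2 ≤ (N:ℝ) := by
            have := hqN
            have h7 : ((q * n^2 : ℕ):ℝ) ≤ (N:ℝ) := by exact_mod_cast this
            push_cast at h7
            linarith
          have hsplit : (n:ℝ)^((1:ℝ)+2*ε) = (n:ℝ) * (n:ℝ)^(2*ε) := by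
            rw [Real.rpow_add hn0R, Real.rpow_one]
          calc ((k:ℝ)*(n:ℝ))*(m:ℝ) ≤ ((k:ℝ)*(n:ℝ)) * (((q:ℕ):ℝ) * ((n:ℝ) * (n:ℝ)^(2*ε))) := by
                rw [← hsplit]
                exact mul_le_mul_of_nonneg_left hmle (by positivity)
            _ = (((q:ℕ):ℝ) * (n:ℝ)^2) * ((k:ℝ) * (n:ℝ)^(2*ε)) := by ring
            _ ≤ (N:ℝ) * ((k:ℝ) * (n:ℝ)^(2*ε)) :=
                mul_le_mul_of_nonneg_right hqn2 (by positivity)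
        have hbase1 : (1:ℝ) ≤ (k:ℝ) * (n:ℝ)^(2*ε) := by
          have h1 : (1:ℝ) ≤ (k:ℝ) := by exact_mod_cast hk
          have h2 : (1:ℝ) ≤ (n:ℝ)^(2*ε) := Real.one_le_rpow hn1R (by positivity)
          nlinarith
        have hkey4 : ((k:ℝ) * (n:ℝ)^(2*ε))^ℓ ≤ (k:ℝ)^(g-1) * (n:ℝ)^(2*ε*((g:ℝ)-1)) := by
          calc ((k:ℝ)*(n:ℝ)^(2*ε))^ℓ ≤ ((k:ℝ)*(n:ℝ)^(2*ε))^(g-1) :=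
                pow_le_pow_right₀ hbase1 hℓg
            _ = (k:ℝ)^(g-1) * ((n:ℝ)^(2*ε))^(g-1) := mul_pow _ _ _
            _ = (k:ℝ)^(g-1) * (n:ℝ)^(2*ε*((g:ℝ)-1)) := by
                congr 1
                rw [← Real.rpow_natCast ((n:ℝ)^(2*ε)) (g-1), ← Real.rpow_mul hn0R.le]
                congr 1
                rw [Nat.cast_sub (by omega : 1 ≤ g)]
                norm_num
        have hpos : (0:ℝ) < (N.choose ℓ : ℝ) * (N:ℝ)^ℓ := by positivity
        have hK0' : (0:ℝ) ≤ (N.choose m : ℝ) := by positivity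
        have hchain : ((k:ℝ)*(n:ℝ))^ℓ * ((N-ℓ).choose (m-ℓ) : ℝ) * ((N.choose ℓ : ℝ) * (N:ℝ)^ℓ)
            ≤ ((k:ℝ)^(g-1) * (n:ℝ)^(2*ε*((g:ℝ)-1)) * (N.choose m : ℝ))
              * ((N.choose ℓ : ℝ) * (N:ℝ)^ℓ) := by
          calc ((k:ℝ)*(n:ℝ))^ℓ * ((N-ℓ).choose (m-ℓ) : ℝ) * ((N.choose ℓ : ℝ) * (N:ℝ)^ℓ)
              = (((N-ℓ).choose (m-ℓ) : ℝ) * (N.choose ℓ : ℝ)) * (((k:ℝ)*(n:ℝ))^ℓ * (N:ℝ)^ℓ) := by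
                ring
            _ = ((N.choose m : ℝ) * (m.choose ℓ : ℝ)) * (((k:ℝ)*(n:ℝ))^ℓ * (N:ℝ)^ℓ) := by
                rw [hid]
            _ = ((N.choose m : ℝ) * ((k:ℝ)*(n:ℝ))^ℓ) * ((m.choose ℓ : ℝ) * (N:ℝ)^ℓ) := by
                ring
            _ ≤ ((N.choose m : ℝ) * ((k:ℝ)*(n:ℝ))^ℓ) * ((N.choose ℓ : ℝ) * (m:ℝ)^ℓ) := by
                refine mul_le_mul_of_nonneg_left hkey2 (by positivity)
            _ = ((N.choose m : ℝ) * (N.choose ℓ : ℝ)) * (((k:ℝ)*(n:ℝ)) * (m:ℝ))^ℓ := by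
                rw [mul_pow]; ring
            _ ≤ ((N.choose m : ℝ) * (N.choose ℓ : ℝ)) * ((N:ℝ) * ((k:ℝ)*(n:ℝ)^(2*ε)))^ℓ := by
                refine mul_le_mul_of_nonneg_left ?_ (by positivity)
                exact pow_le_pow_left₀ (by positivity) hkey3 ℓ
            _ = ((N.choose m : ℝ) * (N.choose ℓ : ℝ) * (N:ℝ)^ℓ) * ((k:ℝ)*(n:ℝ)^(2*ε))^ℓ := by
                rw [mul_pow]; ring
            _ ≤ ((N.choose m : ℝ) * (N.choose ℓ : ℝ) * (N:ℝ)^ℓ)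
                * ((k:ℝ)^(g-1) * (n:ℝ)^(2*ε*((g:ℝ)-1))) := by
                refine mul_le_mul_of_nonneg_left hkey4 (by positivity)
            _ = ((k:ℝ)^(g-1) * (n:ℝ)^(2*ε*((g:ℝ)-1)) * (N.choose m : ℝ))
                * ((N.choose ℓ : ℝ) * (N:ℝ)^ℓ) := by ring
        refine le_of_mul_le_mul_right ?_ hpos
        calc (((k*n)^ℓ * (N-ℓ).choose (m-ℓ) : ℕ) : ℝ) * ((N.choose ℓ : ℝ) * (N:ℝ)^ℓ)
            = ((k:ℝ)*(n:ℝ))^ℓ * ((N-ℓ).choose (m-ℓ) : ℝ) * ((N.choose ℓ : ℝ) * (N:ℝ)^ℓ) := by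
              push_cast
              ring
          _ ≤ _ := hchain
      have hfinal : (∑ ℓ ∈ Finset.Icc 3 (g-1), (((k*n)^ℓ * (N-ℓ).choose (m-ℓ) : ℕ):ℝ))
          < (n:ℝ)^(-ε) * (n:ℝ)^(2*(g:ℝ)*ε) * (N.choose m : ℝ) := by
        have hsum2 := Finset.sum_le_card_nsmul _ _ _ hper
        have hIcc : (Finset.Icc 3 (g-1)).card = g - 3 := by
          rw [Nat.card_Icc]
          omega
        rw [hIcc, nsmul_eq_mul] at hsum2
        have hg3cast : ((g - 3 : ℕ) : ℝ) = (g:ℝ) - 3 := by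
          rw [Nat.cast_sub hg]
          norm_num
        rw [hg3cast] at hsum2
        have hstrict : ((g:ℝ) - 3) * ((k:ℝ)^(g-1) * (n:ℝ)^(2*ε*((g:ℝ)-1)) * (N.choose m : ℝ))
            < (n:ℝ)^ε * ((n:ℝ)^(2*ε*((g:ℝ)-1)) * (N.choose m : ℝ)) := by
          have hDK : (0:ℝ) < (n:ℝ)^(2*ε*((g:ℝ)-1)) * (N.choose m : ℝ) := by
            have : (0:ℝ) < (N.choose m : ℝ) := by exact_mod_cast h𝒢pos
            positivity
          calc ((g:ℝ) - 3) * ((k:ℝ)^(g-1) * (n:ℝ)^(2*ε*((g:ℝ)-1)) * (N.choose m : ℝ))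
              = (((g:ℝ) - 3) * (k:ℝ)^(g-1)) * ((n:ℝ)^(2*ε*((g:ℝ)-1)) * (N.choose m : ℝ)) := by
                ring
            _ < (n:ℝ)^ε * ((n:ℝ)^(2*ε*((g:ℝ)-1)) * (N.choose m : ℝ)) :=
                mul_lt_mul_of_pos_right hn hDK
        have hexp : (n:ℝ)^ε * (n:ℝ)^(2*ε*((g:ℝ)-1)) = (n:ℝ)^(-ε) * (n:ℝ)^(2*(g:ℝ)*ε) := by
          rw [← Real.rpow_add hn0R, ← Real.rpow_add hn0R]
          congr 1
          ring
        calc (∑ ℓ ∈ Finset.Icc 3 (g-1), (((k*n)^ℓ * (N-ℓ).choose (m-ℓ) : ℕ):ℝ))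
            ≤ ((g:ℝ) - 3) * ((k:ℝ)^(g-1) * (n:ℝ)^(2*ε*((g:ℝ)-1)) * (N.choose m : ℝ)) := hsum2
          _ < (n:ℝ)^ε * ((n:ℝ)^(2*ε*((g:ℝ)-1)) * (N.choose m : ℝ)) := hstrict
          _ = ((n:ℝ)^ε * (n:ℝ)^(2*ε*((g:ℝ)-1))) * (N.choose m : ℝ) := by ring
          _ = (n:ℝ)^(-ε) * (n:ℝ)^(2*(g:ℝ)*ε) * (N.choose m : ℝ) := by rw [hexp]
      rw [hcast, h𝒢card]
      calc ((∑ E ∈ Finset.powersetCard m S,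
          cycleCount (SimpleGraph.fromEdgeSet (↑E : Set (Sym2 (Fin k × Fin n)))) (g-1) : ℕ) : ℝ)
          ≤ ((∑ ℓ ∈ Finset.Icc 3 (g-1), (k*n)^ℓ * (N-ℓ).choose (m-ℓ) : ℕ) : ℝ) := by
            exact_mod_cast hnat
        _ = (∑ ℓ ∈ Finset.Icc 3 (g-1), (((k*n)^ℓ * (N-ℓ).choose (m-ℓ) : ℕ):ℝ)) := by
            push_cast; rfl
        _ < (n:ℝ)^(-ε) * (n:ℝ)^(2*(g:ℝ)*ε) * (N.choose m : ℝ) := hfinal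
    · have h𝒯e : 𝒯 = ∅ := by
        rw [Finset.eq_empty_iff_forall_notMem]
        intro C hC
        rw [h𝒯, Finset.mem_filter] at hC
        obtain ⟨hCS, v, w, hcyc, hlen, hCw⟩ := hC
        have h3 := hcyc.three_le_length
        rcases not_and_or.mp hcase with hg4 | hk2
        · omega
        · have hk1 : k = 1 := by omega
          have hSempty : S = ∅ := by
            rw [hS, kpartEdges, Finset.eq_empty_iff_forall_notMem]
            intro e he
            rw [Finset.mem_filter] at he
            refine he.2 ?_
            induction e using Sym2.ind with
            | _ x y =>
              rw [Sym2.map_pair_eq, Sym2.mk_isDiag_iff]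
              have h1 := x.1.isLt
              have h2 := y.1.isLt
              exact Fin.ext (by omega)
          have hwne : w.edges ≠ [] := by
            intro hnil
            have h5 := SimpleGraph.Walk.length_edges w
            rw [hnil] at h5
            simp at h5
            omega
          obtain ⟨e, he⟩ := List.exists_mem_of_ne_nil _ hwne
          have heC : e ∈ C := by rw [← hCw]; exact List.mem_toFinset.mpr he
          have heS := Finset.mem_powerset.mp hCS heC
          rw [hSempty] at heS
          exact absurd heS (Finset.notMem_empty e)
      have hzero : (∑ E ∈ Finset.powersetCard m S,
          cycleCount (SimpleGraph.fromEdgeSet (↑E : Set (Sym2 (Fin k × Fin n)))) (g-1)) = 0 := by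
        have h6 := hsum
        rw [h𝒯e] at h6
        simpa using h6
      rw [hcast, hzero]
      simpa using mul_pos (mul_pos hA0 hB0) hK0
  refine ⟨hpart1, ?_⟩
  have hmark : ∀ (P : Finset (Sym2 (Fin k × Fin n)) → Prop) (inst : DecidablePred P),
      (∀ E, P E → (n:ℝ)^(2*(g:ℝ)*ε)
        ≤ (cycleCount (SimpleGraph.fromEdgeSet (↑E : Set (Sym2 (Fin k × Fin n)))) (g - 1) : ℝ)) →
      (((@Finset.filter _ P inst (Finset.powersetCard m S)).card : ℝ)
        < (n:ℝ)^(-ε) * ((Finset.powersetCard m S).card : ℝ)) := by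
    intro P inst hP
    set F := @Finset.filter _ P inst (Finset.powersetCard m S) with hF
    have h1 : (F.card : ℝ) * ((n:ℝ) ^ (2*(g:ℝ)*ε)) ≤ ∑ E ∈ F,
        (cycleCount (SimpleGraph.fromEdgeSet (↑E : Set (Sym2 (Fin k × Fin n)))) (g - 1) : ℝ) := by
      calc (F.card : ℝ) * ((n:ℝ) ^ (2*(g:ℝ)*ε)) = ∑ _E ∈ F, (n:ℝ) ^ (2*(g:ℝ)*ε) := by
            rw [Finset.sum_const, nsmul_eq_mul]
        _ ≤ ∑ E ∈ F, (cycleCount (SimpleGraph.fromEdgeSet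
            (↑E : Set (Sym2 (Fin k × Fin n)))) (g - 1) : ℝ) :=
            Finset.sum_le_sum (fun E hE => hP E (Finset.mem_filter.mp hE).2)
    have hFsub : F ⊆ Finset.powersetCard m S := Finset.filter_subset _ _
    have h2 : ∑ E ∈ F, (cycleCount (SimpleGraph.fromEdgeSet
        (↑E : Set (Sym2 (Fin k × Fin n)))) (g - 1) : ℝ)
        ≤ ∑ E ∈ Finset.powersetCard m S, (cycleCount (SimpleGraph.fromEdgeSet
          (↑E : Set (Sym2 (Fin k × Fin n)))) (g - 1) : ℝ) := by
      apply Finset.sum_le_sum_of_subset_of_nonneg hFsub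
      intro i hi hni
      positivity
    have h3 : (F.card:ℝ) * ((n:ℝ) ^ (2*(g:ℝ)*ε))
        < ((n:ℝ)^(-ε) * ((Finset.powersetCard m S).card : ℝ)) * ((n:ℝ) ^ (2*(g:ℝ)*ε)) := by
      calc (F.card:ℝ) * ((n:ℝ) ^ (2*(g:ℝ)*ε)) ≤ _ := h1
        _ ≤ _ := h2
        _ < (n : ℝ) ^ (-ε) * (n : ℝ) ^ (2 * (g : ℝ) * ε)
            * ((Finset.powersetCard m S).card : ℝ) := hpart1
        _ = ((n:ℝ)^(-ε) * ((Finset.powersetCard m S).card : ℝ)) * ((n:ℝ) ^ (2*(g:ℝ)*ε)) := by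
            ring
    exact lt_of_mul_lt_mul_right h3 hB0.le
  have key := hmark (fun E => (n : ℝ) ^ (2 * (g : ℝ) * ε)
      < (cycleCount (SimpleGraph.fromEdgeSet (↑E : Set (Sym2 (Fin k × Fin n)))) (g - 1) : ℝ))
    (fun E => Classical.propDecidable _) (fun E hE => le_of_lt hE)
  refine lt_of_le_of_lt ?_ key
  rw [Nat.cast_le]
  apply Finset.card_le_card_of_injOn (fun s : Set (Sym2 (Fin k × Fin n)) =>
    (Set.toFinite s).toFinset)
  · intro E hE
    rw [Finset.mem_coe, Finset.mem_filter] at hE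
    obtain ⟨hEM, hEP⟩ := hE
    have hEM' : E ∈ (Finset.powersetCard m S).sup
        (fun a => ({(↑a : Set (Sym2 (Fin k × Fin n)))} :
          Finset (Set (Sym2 (Fin k × Fin n))))) := hEM
    rw [Finset.mem_sup] at hEM'
    obtain ⟨a, ha, hEa⟩ := hEM'
    rw [Finset.mem_singleton] at hEa
    subst hEa
    have hten : (Set.toFinite ((↑a : Set (Sym2 (Fin k × Fin n))))).toFinset = a := by
      ext x
      simp [Set.Finite.mem_toFinset]; exact Iff.rfl
    refine Finset.mem_coe.mpr (Finset.mem_filter.mpr ⟨?_, ?_⟩)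
    · beta_reduce; rw [hten]; exact ha
    · beta_reduce; rw [hten]; exact hEP
  · intro E₁ h₁ E₂ h₂ heq
    have h3 := congrArg (fun t : Finset (Sym2 (Fin k × Fin n)) => (↑t : Set (Sym2 (Fin k × Fin n)))) heq
    simpa [Set.Finite.coe_toFinset] using h3
end

section
/- Let k, t, r be positive integers, ε > 0 a real number, q = k(k−1)/2, and let G_0 be a k-partite graph with partite sets V_1,…,V_k, each of size n, such that for any i ≠ j and any subsets A ⊆ V_i, B ⊆ V_j with |A|, |B| ≥ ⌊n/t⌋ there are at least (1/2)·n^{1+ε} edges between A and B. If n is large enough that q·(e·k·r^k)^{2n}·(1 − 1/r²)^{n^{1+ε}/4} < 1, then there exists a mapping f : E(G_0) → [r] × [r] such that for every mapping g : V(G_0) → [r], for any 1 ≤ i < j ≤ k and any subsets A ⊆ V_i, B ⊆ V_j with |A|, |B| ≥ ⌊n/t⌋, there is at least one edge e = xy of G_0 with x ∈ A, y ∈ B and f(e) = (g(x), g(y)). -/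
open Finset

lemma card_le_of_avoid {α β : Type*} [Fintype α] [DecidableEq α] [Fintype β] [DecidableEq β]
    (S : Finset (α → β)) (p : α → Prop) [DecidablePred p] (τ : α → β)
    (h : ∀ f ∈ S, ∀ a, p a → f a ≠ τ a) :
    S.card ≤ (Fintype.card β - 1) ^ (univ.filter p).card *
      (Fintype.card β) ^ (Fintype.card α - (univ.filter p).card) := by
  classical
  have hsub : S ⊆ Fintype.piFinset (fun a => if p a then univ.erase (τ a) else univ) := by
    intro f hf
    rw [Fintype.mem_piFinset]
    intro a
    by_cases hpa : p a
    · simp only [if_pos hpa, mem_erase, mem_univ, and_true]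
      exact h f hf a hpa
    · simp [if_neg hpa]
  calc S.card ≤ _ := Finset.card_le_card hsub
    _ = ∏ a, (if p a then (univ.erase (τ a)) else univ).card := Fintype.card_piFinset _
    _ = ∏ a, (if p a then Fintype.card β - 1 else Fintype.card β) := by
        apply Finset.prod_congr rfl
        intro a _
        split
        · simp [Finset.card_erase_of_mem]
        · simp
    _ = (Fintype.card β - 1) ^ (univ.filter p).card *
        (Fintype.card β) ^ (univ.filter (fun a => ¬ p a)).card := by
        rw [Finset.prod_ite, Finset.prod_const, Finset.prod_const]
    _ = _ := by
        congr 2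
        have := Finset.card_filter_add_card_filter_not (s := (univ : Finset α)) (p := p)
        simp only [Finset.card_univ] at this
        omega

lemma card_lt_pairs (k : ℕ) :
    ((univ : Finset (Fin k × Fin k)).filter (fun p => p.1 < p.2)).card ≤ k * (k - 1) / 2 := by
  classical
  set L := (univ : Finset (Fin k × Fin k)).filter (fun p => p.1 < p.2) with hL
  set Gf := (univ : Finset (Fin k × Fin k)).filter (fun p => p.2 < p.1) with hG
  have himg : L.image Prod.swap = Gf := by
    ext ⟨a, b⟩
    simp only [hL, hG, Finset.mem_image, Finset.mem_filter, Finset.mem_univ, true_and]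
    constructor
    · rintro ⟨⟨x, y⟩, hxy, hswap⟩
      have h1 : y = a := congrArg Prod.fst hswap
      have h2 : x = b := congrArg Prod.snd hswap
      subst h1; subst h2; exact hxy
    · intro h
      exact ⟨(b, a), h, rfl⟩
  have hcardeq : L.card = Gf.card := by
    rw [← himg, Finset.card_image_of_injective _ Prod.swap_injective]
  have hdisj : Disjoint L Gf := by
    rw [Finset.disjoint_filter]
    intro p _ h1 h2
    exact absurd h1 (asymm h2)
  have hunion : (L ∪ Gf).card ≤ k * k - k := by
    have hsub : L ∪ Gf ⊆ (univ : Finset (Fin k × Fin k)).filter (fun p => p.1 ≠ p.2) := by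
      intro p hp
      simp only [hL, hG, Finset.mem_union, Finset.mem_filter, Finset.mem_univ, true_and] at hp ⊢
      rcases hp with h | h
      · exact ne_of_lt h
      · exact (ne_of_lt h).symm
    have hdiag : ((univ : Finset (Fin k × Fin k)).filter (fun p => p.1 = p.2)).card = k := by
      have heq : ((univ : Finset (Fin k × Fin k)).filter (fun p => p.1 = p.2))
          = (univ : Finset (Fin k)).image (fun i => (i, i)) := by
        ext ⟨a, b⟩
        simp only [Finset.mem_filter, Finset.mem_univ, true_and, Finset.mem_image]
        constructor
        · rintro rfl; exact ⟨a, rfl⟩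
        · rintro ⟨i, h⟩
          have h1 : i = a := congrArg Prod.fst h
          have h2 : i = b := congrArg Prod.snd h
          rw [← h1, ← h2]
      rw [heq, Finset.card_image_of_injective]
      · simp
      · intro a b h; exact congrArg Prod.fst h
    have htot := Finset.card_filter_add_card_filter_not
      (s := (univ : Finset (Fin k × Fin k))) (p := fun p => p.1 = p.2)
    simp only [Finset.card_univ, Fintype.card_prod, Fintype.card_fin] at htot
    have hne : ((univ : Finset (Fin k × Fin k)).filter (fun p => ¬ p.1 = p.2)).card
        = k * k - k := by
      omega
    calc (L ∪ Gf).card ≤ _ := Finset.card_le_card hsub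
      _ = k * k - k := hne
  have h2 : 2 * L.card ≤ k * k - k := by
    have := Finset.card_union_of_disjoint hdisj
    omega
  have hkk : k * k - k = k * (k - 1) := by
    cases k <;> simp [Nat.mul_sub_one, Nat.succ_mul] <;> ring
  rw [Nat.le_div_iff_mul_le (by norm_num)]
  omega

lemma count_bound (r n N c : ℕ) (ε : ℝ) (hr : 0 < r) (hn1 : 1 ≤ n) (hε : 0 < ε)
    (hc : (n:ℝ) ^ ((1:ℝ) + ε) / 2 ≤ (c:ℝ)) (hcN : c ≤ N) :
    ((r * r - 1 : ℕ) : ℝ) ^ c * ((r * r : ℕ) : ℝ) ^ (N - c) ≤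
      ((r * r : ℕ) : ℝ) ^ N * (1 - 1 / (r : ℝ) ^ 2) ^ ((n : ℝ) ^ ((1:ℝ) + ε) / 4) := by
  have hR1 : (1:ℝ) ≤ (r:ℝ) := by exact_mod_cast hr
  have hR0 : (0:ℝ) < (r:ℝ) := by linarith
  have hrr : 1 ≤ r * r := Nat.one_le_iff_ne_zero.mpr (by positivity)
  have hcast : ((r * r - 1 : ℕ) : ℝ) = (r:ℝ) * r - 1 := by
    rw [Nat.cast_sub hrr]; push_cast; ring
  have hm1 : (1:ℝ) ≤ (n:ℝ) ^ ((1:ℝ) + ε) := by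
    apply Real.one_le_rpow (by exact_mod_cast hn1) (by linarith)
  have hm0 : (0:ℝ) ≤ (n:ℝ) ^ ((1:ℝ) + ε) := by linarith
  set m : ℝ := (n:ℝ) ^ ((1:ℝ) + ε) with hm
  have hbase0 : (0:ℝ) ≤ 1 - 1 / (r:ℝ) ^ 2 := by
    rw [sub_nonneg]
    rw [div_le_one (by positivity)]
    nlinarith
  have hfact : ((r * r : ℕ) : ℝ) ^ N * (1 - 1 / (r:ℝ)^2) ^ c
      = ((r * r - 1 : ℕ):ℝ) ^ c * ((r * r : ℕ):ℝ) ^ (N - c) := by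
    have h1 : ((r*r - 1 : ℕ):ℝ) = ((r*r:ℕ):ℝ) * (1 - 1 / (r:ℝ)^2) := by
      rw [hcast]; push_cast; field_simp
    rw [h1, mul_pow]
    have h2 : ((r * r : ℕ):ℝ) ^ N = ((r * r : ℕ):ℝ) ^ c * ((r * r : ℕ):ℝ) ^ (N - c) := by
      rw [← pow_add]; congr 1; omega
    rw [h2]; ring
  rw [← hfact]
  apply mul_le_mul_of_nonneg_left _ (by positivity)
  rcases eq_or_lt_of_le hR1 with hR | hR
  · have hb : 1 - 1 / (r:ℝ)^2 = 0 := by rw [← hR]; norm_num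
    have hc1 : 1 ≤ c := by
      by_contra h
      push_neg at h
      interval_cases c
      simp at hc
      linarith
    rw [hb, zero_pow (by omega), Real.zero_rpow (by positivity)]
  · have hblt : 1 - 1 / (r:ℝ)^2 < 1 := by
      have : (0:ℝ) < 1 / (r:ℝ)^2 := by positivity
      linarith
    have hbpos : (0:ℝ) < 1 - 1 / (r:ℝ)^2 := by
      rw [sub_pos, div_lt_one (by positivity)]
      nlinarith
    rw [← Real.rpow_natCast (1 - 1 / (r:ℝ)^2) c]
    apply Real.rpow_le_rpow_of_exponent_ge hbpos (le_of_lt hblt)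
    linarith

/-- The number of edges of `G` with one endpoint in `A` and the other in `B`. -/
noncomputable def edgesBetween {V : Type*} (G : SimpleGraph V) (A B : Finset V) : ℕ :=
  Set.ncard {e : Sym2 V | e ∈ G.edgeSet ∧ ∃ a ∈ A, ∃ b ∈ B, e = s(a, b)}

lemma edgesBetween_le_card {V : Type*} [Fintype V] (G : SimpleGraph V) (A B : Finset V) :
    edgesBetween G A B ≤ Fintype.card (Sym2 V) := by
  classical
  rw [edgesBetween]
  calc Set.ncard _ ≤ Set.ncard (Set.univ : Set (Sym2 V)) :=
        Set.ncard_le_ncard (Set.subset_univ _) Set.finite_univ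
    _ = Fintype.card (Sym2 V) := by rw [Set.ncard_univ, Nat.card_eq_fintype_card]

lemma bad_card_le {V : Type*} [Fintype V] [DecidableEq V] (G : SimpleGraph V)
    (r : ℕ) (hr : 0 < r) (g : V → Fin r) (A B : Finset V)
    (S : Finset (Sym2 V → Fin r × Fin r))
    (hS : ∀ f ∈ S, ∀ x ∈ A, ∀ y ∈ B, G.Adj x y → f s(x, y) ≠ (g x, g y)) :
    S.card ≤ (r * r - 1) ^ (edgesBetween G A B) *
      (r * r) ^ (Fintype.card (Sym2 V) - edgesBetween G A B) := by
  classical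
  have hedge : edgesBetween G A B =
      (univ.filter (fun e : Sym2 V => ∃ x ∈ A, ∃ y ∈ B, G.Adj x y ∧ e = s(x, y))).card := by
    have hsetx : {e : Sym2 V | e ∈ G.edgeSet ∧ ∃ a ∈ A, ∃ b ∈ B, e = s(a, b)}
        = ↑(univ.filter (fun e : Sym2 V => ∃ x ∈ A, ∃ y ∈ B, G.Adj x y ∧ e = s(x, y))) := by
      ext e
      simp only [Finset.coe_filter, Finset.mem_univ, true_and, Set.mem_setOf_eq]
      constructor
      · rintro ⟨he, a, ha, b, hb, rfl⟩
        exact ⟨a, ha, b, hb, (SimpleGraph.mem_edgeSet G).mp he, rfl⟩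
      · rintro ⟨x, hx, y, hy, hadj, rfl⟩
        exact ⟨(SimpleGraph.mem_edgeSet G).mpr hadj, x, hx, y, hy, rfl⟩
    rw [edgesBetween, hsetx, Set.ncard_coe_finset]
  have hmain := card_le_of_avoid S (fun e : Sym2 V => ∃ x ∈ A, ∃ y ∈ B, G.Adj x y ∧ e = s(x, y))
    (fun e => if h : ∃ x ∈ A, ∃ y ∈ B, G.Adj x y ∧ e = s(x, y)
      then (g h.choose, g h.choose_spec.2.choose) else (⟨0, hr⟩, ⟨0, hr⟩)) ?_
  · have hcardβ : Fintype.card (Fin r × Fin r) = r * r := by simp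
    rw [hcardβ] at hmain
    rw [hedge]
    exact hmain
  · intro f hf e he
    show f e ≠ (if h : ∃ x ∈ A, ∃ y ∈ B, G.Adj x y ∧ e = s(x, y)
      then (g h.choose, g h.choose_spec.2.choose) else (⟨0, hr⟩, ⟨0, hr⟩))
    rw [dif_pos he]
    have hx : he.choose ∈ A := he.choose_spec.1
    have hy : he.choose_spec.2.choose ∈ B := he.choose_spec.2.choose_spec.1
    have hadj : G.Adj he.choose he.choose_spec.2.choose := he.choose_spec.2.choose_spec.2.1
    have heq : e = s(he.choose, he.choose_spec.2.choose) := he.choose_spec.2.choose_spec.2.2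
    have hgoal := hS f hf _ hx _ hy hadj
    rw [← heq] at hgoal
    exact hgoal

/-- Let `G` be a `k`-partite graph with parts `P 0, …, P (k-1)` of size `n` such that any two
sets `A ⊆ P i`, `B ⊆ P j` (`i ≠ j`) of size at least `⌊n/t⌋` have at least `(1/2)·n^(1+ε)`
edges between them. If `n` is large enough that
`q·(e·k·r^k)^(2n)·(1 - 1/r²)^(n^(1+ε)/4) < 1` (with `q = k(k-1)/2`), then there is a
labelling `f : E(G) → [r] × [r]` such that for every `g : V(G) → [r]`, every `i < j`, and all
`A ⊆ P i`, `B ⊆ P j` of size at least `⌊n/t⌋`, some edge `xy` with `x ∈ A`, `y ∈ B` has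
`f(xy) = (g x, g y)`. -/
theorem exists_good_edge_labelling {V : Type*} [Fintype V] [DecidableEq V]
    (k t r n : ℕ) (hk : 0 < k) (ht : 0 < t) (hr : 0 < r) (ε : ℝ) (hε : 0 < ε)
    (G : SimpleGraph V) (P : Fin k → Finset V)
    (hdisj : ∀ i j, i ≠ j → Disjoint (P i) (P j))
    (hcover : ∀ v, ∃ i, v ∈ P i)
    (hcard : ∀ i, (P i).card = n)
    (hpartite : ∀ i, ∀ u ∈ P i, ∀ v ∈ P i, ¬ G.Adj u v)
    (hexp : ∀ i j, i ≠ j → ∀ A ⊆ P i, ∀ B ⊆ P j, n / t ≤ A.card → n / t ≤ B.card →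
      (1 / 2 : ℝ) * (n : ℝ) ^ ((1 : ℝ) + ε) ≤ (edgesBetween G A B : ℝ))
    (hn : ((k * (k - 1) / 2 : ℕ) : ℝ) * (Real.exp 1 * k * (r : ℝ) ^ k) ^ (2 * n) *
        (1 - 1 / (r : ℝ) ^ 2) ^ ((n : ℝ) ^ ((1 : ℝ) + ε) / 4) < 1) :
    ∃ f : Sym2 V → Fin r × Fin r, ∀ g : V → Fin r, ∀ i j : Fin k, i < j →
      ∀ A ⊆ P i, ∀ B ⊆ P j, n / t ≤ A.card → n / t ≤ B.card →
        ∃ x ∈ A, ∃ y ∈ B, G.Adj x y ∧ f s(x, y) = (g x, g y) := by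
  classical
  rcases Nat.lt_or_ge k 2 with hk2 | hk2
  · -- k = 1 : no pairs i < j
    have hk1 : k = 1 := by omega
    subst hk1
    refine ⟨fun _ => (⟨0, hr⟩, ⟨0, hr⟩), ?_⟩
    intro g i j hij
    have hi := i.isLt
    have hj := j.isLt
    have hlt : i.val < j.val := hij
    omega
  -- k ≥ 2
  have hq1 : 1 ≤ k * (k - 1) / 2 := by
    rw [Nat.le_div_iff_mul_le (by norm_num)]
    calc 1 * 2 = 2 * 1 := by norm_num
      _ ≤ k * (k - 1) := Nat.mul_le_mul hk2 (by omega)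
  have hn1 : 1 ≤ n := by
    by_contra hcon
    push_neg at hcon
    interval_cases n
    rw [mul_zero, pow_zero, Nat.cast_zero, Real.zero_rpow (by positivity), zero_div,
      Real.rpow_zero, mul_one, mul_one] at hn
    have h1 : (1:ℝ) ≤ ((k * (k - 1) / 2 : ℕ) : ℝ) := by exact_mod_cast hq1
    linarith
  have hR1 : (1:ℝ) ≤ (r:ℝ) := by exact_mod_cast hr
  have hbase0 : (0:ℝ) ≤ 1 - 1 / (r:ℝ) ^ 2 := by
    rw [sub_nonneg, div_le_one (by positivity)]
    nlinarith
  set β : ℝ := (1 - 1 / (r:ℝ) ^ 2) ^ ((n:ℝ) ^ ((1:ℝ) + ε) / 4) with hβdef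
  have hβ0 : 0 ≤ β := Real.rpow_nonneg hbase0 _
  set N := Fintype.card (Sym2 V) with hNdef
  set Creal : ℝ := ((r * r : ℕ) : ℝ) ^ N * β with hCrealdef
  have hCreal0 : 0 ≤ Creal := mul_nonneg (by positivity) hβ0
  have hV : Fintype.card V = k * n := by
    have huniv : (univ : Finset V) = univ.biUnion P := by
      ext v
      simp only [Finset.mem_biUnion, Finset.mem_univ, true_and]
      exact iff_of_true trivial (hcover v)
    rw [← Finset.card_univ, huniv, Finset.card_biUnion
      (fun i _ j _ hij => hdisj i j hij)]
    simp [hcard, Finset.sum_const, Finset.card_univ, mul_comm]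
  set BadF : (V → Fin r) → (Fin k × Fin k) → Finset V → Finset V →
      Finset (Sym2 V → Fin r × Fin r) :=
    fun g p A B => univ.filter (fun f => n / t ≤ A.card ∧ n / t ≤ B.card ∧
      ∀ x ∈ A, ∀ y ∈ B, G.Adj x y → f s(x, y) ≠ (g x, g y)) with hBadFdef
  set pairs : Finset (Fin k × Fin k) := univ.filter (fun p => p.1 < p.2) with hpairsdef
  set badset : Finset (Sym2 V → Fin r × Fin r) := univ.filter (fun f =>
    ∃ g : V → Fin r, ∃ p : Fin k × Fin k, p.1 < p.2 ∧ ∃ A B : Finset V,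
      A ⊆ P p.1 ∧ B ⊆ P p.2 ∧ n / t ≤ A.card ∧ n / t ≤ B.card ∧
      ∀ x ∈ A, ∀ y ∈ B, G.Adj x y → f s(x, y) ≠ (g x, g y)) with hbadsetdef
  -- per-event bound
  have key : ∀ g : V → Fin r, ∀ p ∈ pairs, ∀ A ∈ (P p.1).powerset, ∀ B ∈ (P p.2).powerset,
      ((BadF g p A B).card : ℝ) ≤ Creal := by
    intro g p hp A hA B hB
    rw [hpairsdef, Finset.mem_filter] at hp
    rw [Finset.mem_powerset] at hA hB
    by_cases hc : n / t ≤ A.card ∧ n / t ≤ B.card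
    · obtain ⟨hcA, hcB⟩ := hc
      have hS : ∀ f ∈ BadF g p A B, ∀ x ∈ A, ∀ y ∈ B, G.Adj x y →
          f s(x, y) ≠ (g x, g y) := by
        intro f hf
        rw [hBadFdef, Finset.mem_filter] at hf
        exact hf.2.2.2
      have h1 := bad_card_le G r hr g A B (BadF g p A B) hS
      set c := edgesBetween G A B with hcdef
      have hcN : c ≤ N := edgesBetween_le_card G A B
      have hexp' := hexp p.1 p.2 (ne_of_lt hp.2) A hA B hB hcA hcB
      have hc2 : (n:ℝ) ^ ((1:ℝ) + ε) / 2 ≤ (c:ℝ) := by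
        rw [hcdef]
        linarith
      have hcb := count_bound r n N c ε hr hn1 hε hc2 hcN
      calc ((BadF g p A B).card : ℝ)
          ≤ ((r * r - 1 : ℕ) : ℝ) ^ c * ((r * r : ℕ) : ℝ) ^ (N - c) := by
            exact_mod_cast h1
        _ ≤ Creal := hcb
    · have hempty : BadF g p A B = ∅ := by
        rw [hBadFdef]
        ext f
        simp only [Finset.mem_filter, Finset.mem_univ, true_and, Finset.notMem_empty,
          iff_false]
        tauto
      rw [hempty]
      simpa using hCreal0
  -- union bound
  have hsub : badset ⊆ (univ : Finset (V → Fin r)).biUnion (fun g =>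
      pairs.biUnion (fun p => ((P p.1).powerset).biUnion (fun A =>
        ((P p.2).powerset).biUnion (fun B => BadF g p A B)))) := by
    intro f hf
    rw [hbadsetdef, Finset.mem_filter] at hf
    obtain ⟨-, g, p, hplt, A, B, hA, hB, hcA, hcB, hbad⟩ := hf
    rw [Finset.mem_biUnion]
    refine ⟨g, Finset.mem_univ g, ?_⟩
    rw [Finset.mem_biUnion]
    refine ⟨p, by rw [hpairsdef, Finset.mem_filter]; exact ⟨Finset.mem_univ _, hplt⟩, ?_⟩
    rw [Finset.mem_biUnion]
    refine ⟨A, Finset.mem_powerset.mpr hA, ?_⟩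
    rw [Finset.mem_biUnion]
    refine ⟨B, Finset.mem_powerset.mpr hB, ?_⟩
    rw [hBadFdef]
    simp only [Finset.mem_filter, Finset.mem_univ, true_and]
    exact ⟨hcA, hcB, hbad⟩
  have t1 : badset.card ≤ ∑ g : V → Fin r, ∑ p ∈ pairs, ∑ A ∈ (P p.1).powerset,
      ∑ B ∈ (P p.2).powerset, (BadF g p A B).card := by
    refine (Finset.card_le_card hsub).trans ?_
    refine Finset.card_biUnion_le.trans ?_
    refine Finset.sum_le_sum (fun g _ => ?_)
    refine Finset.card_biUnion_le.trans ?_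
    refine Finset.sum_le_sum (fun p _ => ?_)
    refine Finset.card_biUnion_le.trans ?_
    refine Finset.sum_le_sum (fun A _ => ?_)
    exact Finset.card_biUnion_le
  have t2 : (badset.card : ℝ) ≤ ∑ g : V → Fin r, ∑ p ∈ pairs, ∑ A ∈ (P p.1).powerset,
      ∑ B ∈ (P p.2).powerset, ((BadF g p A B).card : ℝ) := by
    exact_mod_cast t1
  have t3 : (badset.card : ℝ) ≤ ((r:ℝ) ^ (k * n)) * (pairs.card : ℝ) * (2:ℝ)^n * (2:ℝ)^n
      * Creal := by
    refine t2.trans ?_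
    have step : ∀ g : V → Fin r, ∀ p ∈ pairs, ∑ A ∈ (P p.1).powerset,
        ∑ B ∈ (P p.2).powerset, ((BadF g p A B).card : ℝ) ≤ (2:ℝ)^n * ((2:ℝ)^n * Creal) := by
      intro g p hp
      calc ∑ A ∈ (P p.1).powerset, ∑ B ∈ (P p.2).powerset, ((BadF g p A B).card : ℝ)
          ≤ ∑ A ∈ (P p.1).powerset, ∑ B ∈ (P p.2).powerset, Creal := by
            refine Finset.sum_le_sum (fun A hA => Finset.sum_le_sum (fun B hB => ?_))
            exact key g p hp A hA B hB
        _ = ((P p.1).powerset.card : ℝ) * (((P p.2).powerset.card : ℝ) * Creal) := by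
            rw [Finset.sum_const, Finset.sum_const, nsmul_eq_mul, nsmul_eq_mul]
        _ = (2:ℝ)^n * ((2:ℝ)^n * Creal) := by
            rw [Finset.card_powerset, Finset.card_powerset, hcard, hcard]
            push_cast
            ring
    calc ∑ g : V → Fin r, ∑ p ∈ pairs, ∑ A ∈ (P p.1).powerset,
        ∑ B ∈ (P p.2).powerset, ((BadF g p A B).card : ℝ)
        ≤ ∑ _g : V → Fin r, ∑ _p ∈ pairs, (2:ℝ)^n * ((2:ℝ)^n * Creal) := by
          refine Finset.sum_le_sum (fun g _ => Finset.sum_le_sum (fun p hp => step g p hp))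
      _ = (Fintype.card (V → Fin r) : ℝ) * ((pairs.card : ℝ) * ((2:ℝ)^n * ((2:ℝ)^n * Creal))) := by
          rw [Finset.sum_const, Finset.sum_const, nsmul_eq_mul, nsmul_eq_mul, Finset.card_univ]
      _ = ((r:ℝ) ^ (k * n)) * (pairs.card : ℝ) * (2:ℝ)^n * (2:ℝ)^n * Creal := by
          rw [Fintype.card_fun, hV, Fintype.card_fin]
          push_cast
          ring
  -- numeric comparison
  have he2 : (2:ℝ) ≤ Real.exp 1 := by
    have := Real.add_one_le_exp 1
    linarith
  have hk1R : (1:ℝ) ≤ (k:ℝ) := by exact_mod_cast hk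
  have hnum : (r:ℝ) ^ (k * n) * (2:ℝ)^n * (2:ℝ)^n ≤ (Real.exp 1 * k * (r:ℝ)^k) ^ (2 * n) := by
    have expand : (Real.exp 1 * k * (r:ℝ)^k) ^ (2 * n)
        = (Real.exp 1) ^ (2 * n) * (k:ℝ) ^ (2 * n) * (r:ℝ) ^ (k * (2 * n)) := by
      rw [mul_pow, mul_pow, ← pow_mul]
    rw [expand]
    have a1 : (2:ℝ) ^ (2 * n) ≤ (Real.exp 1) ^ (2 * n) :=
      pow_le_pow_left₀ (by norm_num) he2 _
    have a2 : (1:ℝ) ≤ (k:ℝ) ^ (2 * n) := by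
      simpa using pow_le_pow_left₀ (by norm_num : (0:ℝ) ≤ 1) hk1R (2 * n)
    have a3 : (r:ℝ) ^ (k * n) ≤ (r:ℝ) ^ (k * (2 * n)) :=
      pow_le_pow_right₀ hR1 (by nlinarith)
    have h1 : (r:ℝ) ^ (k * n) * (2:ℝ)^n * (2:ℝ)^n = (2:ℝ) ^ (2 * n) * (r:ℝ) ^ (k * n) := by
      rw [two_mul, pow_add]
      ring
    rw [h1]
    calc (2:ℝ) ^ (2 * n) * (r:ℝ) ^ (k * n)
        ≤ (Real.exp 1) ^ (2 * n) * (r:ℝ) ^ (k * n) :=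
          mul_le_mul_of_nonneg_right a1 (by positivity)
      _ ≤ (Real.exp 1) ^ (2 * n) * (r:ℝ) ^ (k * (2 * n)) :=
          mul_le_mul_of_nonneg_left a3 (by positivity)
      _ = (Real.exp 1) ^ (2 * n) * 1 * (r:ℝ) ^ (k * (2 * n)) := by ring
      _ ≤ (Real.exp 1) ^ (2 * n) * (k:ℝ) ^ (2 * n) * (r:ℝ) ^ (k * (2 * n)) := by
          refine mul_le_mul_of_nonneg_right (mul_le_mul_of_nonneg_left a2 (by positivity))
            (by positivity)
  have hpc : (pairs.card : ℝ) ≤ ((k * (k - 1) / 2 : ℕ) : ℝ) := by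
    rw [hpairsdef]
    exact_mod_cast card_lt_pairs k
  have hfinal : (badset.card : ℝ) < ((r * r : ℕ) : ℝ) ^ N := by
    have hstep : (r:ℝ) ^ (k * n) * (pairs.card : ℝ) * (2:ℝ)^n * (2:ℝ)^n
        ≤ ((k * (k - 1) / 2 : ℕ) : ℝ) * (Real.exp 1 * k * (r:ℝ)^k) ^ (2 * n) := by
      calc (r:ℝ) ^ (k * n) * (pairs.card : ℝ) * (2:ℝ)^n * (2:ℝ)^n
          = (pairs.card : ℝ) * ((r:ℝ) ^ (k * n) * (2:ℝ)^n * (2:ℝ)^n) := by ring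
        _ ≤ ((k * (k - 1) / 2 : ℕ) : ℝ) * (Real.exp 1 * k * (r:ℝ)^k) ^ (2 * n) :=
            mul_le_mul hpc hnum (by positivity) (by positivity)
    calc (badset.card : ℝ)
        ≤ (r:ℝ) ^ (k * n) * (pairs.card : ℝ) * (2:ℝ)^n * (2:ℝ)^n * Creal := t3
      _ ≤ ((k * (k - 1) / 2 : ℕ) : ℝ) * (Real.exp 1 * k * (r:ℝ)^k) ^ (2 * n) * Creal :=
          mul_le_mul_of_nonneg_right hstep hCreal0
      _ = (((k * (k - 1) / 2 : ℕ) : ℝ) * (Real.exp 1 * k * (r:ℝ)^k) ^ (2 * n) * β)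
          * ((r * r : ℕ) : ℝ) ^ N := by
          rw [hCrealdef]
          ring
      _ < 1 * ((r * r : ℕ) : ℝ) ^ N := by
          refine mul_lt_mul_of_pos_right ?_ (by positivity)
          exact hn
      _ = ((r * r : ℕ) : ℝ) ^ N := one_mul _
  have hΩ : Fintype.card (Sym2 V → Fin r × Fin r) = (r * r) ^ N := by
    rw [Fintype.card_fun]
    simp [hNdef]
  have hlt : badset.card < Fintype.card (Sym2 V → Fin r × Fin r) := by
    rw [hΩ]
    exact_mod_cast hfinal
  have hex : ∃ f : Sym2 V → Fin r × Fin r, f ∉ badset := by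
    by_contra hcon
    push_neg at hcon
    have hsub2 : (univ : Finset (Sym2 V → Fin r × Fin r)) ⊆ badset := fun f _ => hcon f
    have hcards := Finset.card_le_card hsub2
    rw [Finset.card_univ] at hcards
    omega
  obtain ⟨f, hf⟩ := hex
  refine ⟨f, ?_⟩
  intro g i j hij A hA B hB hcA hcB
  by_contra hcon
  push_neg at hcon
  apply hf
  rw [hbadsetdef, Finset.mem_filter]
  exact ⟨Finset.mem_univ _, g, (i, j), hij, A, B, hA, hB, hcA, hcB, hcon⟩
end

section
/- Let G_0 be a graph of girth at least g, and let G be a graph obtained from G_0 as follows: each vertex v of G_0 is replaced by a set S_v of r new vertices inducing a graph of girth at least g, each edge uv of G_0 is replaced by a single edge joining some vertex of S_u to some vertex of S_v, and there are no other edges. Then G has girth at least g. -/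
open SimpleGraph Walk List

section GirthSplitAux

private lemma shrink_step' {α : Type*} {H : SimpleGraph α} {x : α} (w : H.Walk x x)
    (hnd : w.edges.Nodup) (hdup : List.Duplicate x w.support.tail) :
    ∃ w₁ : H.Walk x x, w₁.edges.Nodup ∧ ¬ w₁.Nil ∧ w₁.length < w.length := by
  classical
  cases w with
  | nil => simp at hdup
  | @cons _ c _ h p =>
    rw [Walk.support_cons, List.tail_cons] at hdup
    have hxp : x ∈ p.support := hdup.mem
    set q := p.takeUntil x hxp with hq
    set d := p.dropUntil x hxp with hd
    have hspec : q.append d = p := p.take_spec hxp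
    rw [Walk.edges_cons] at hnd
    have hxc : s(x, c) ∉ p.edges := (List.nodup_cons.mp hnd).1
    have hpnd : p.edges.Nodup := (List.nodup_cons.mp hnd).2
    have hqe : q.edges ++ d.edges = p.edges := by rw [← Walk.edges_append, hspec]
    have hqnd : q.edges.Nodup := by
      rw [← hqe] at hpnd; exact hpnd.of_append_left
    have hcount : 2 ≤ p.support.count x := List.duplicate_iff_two_le_count.mp hdup
    have hsupp : q.support ++ d.support.tail = p.support := by
      rw [← Walk.support_append, hspec]
    have hcq : q.support.count x = 1 := p.count_support_takeUntil_eq_one hxp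
    have hdlen : 1 ≤ d.length := by
      by_contra hh
      push_neg at hh
      have hdnil : d.support.tail = [] := by
        have h1 := d.length_support
        exact List.length_eq_zero_iff.mp (by rw [List.length_tail, h1]; omega)
      rw [← hsupp, List.count_append, hcq, hdnil] at hcount
      simp at hcount
    have hlenq : q.length < p.length := by
      have := congrArg Walk.length hspec
      rw [Walk.length_append] at this
      omega
    refine ⟨Walk.cons h q, ?_, Walk.not_nil_cons, ?_⟩
    · rw [Walk.edges_cons, List.nodup_cons]
      exact ⟨fun hmem => hxc (p.edges_takeUntil_subset hxp hmem), hqnd⟩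
    · simp only [Walk.length_cons]; omega

private lemma exists_cycle_of_closed_trail' {α : Type*} {H : SimpleGraph α} :
    ∀ (n : ℕ) {u : α} (w : H.Walk u u), w.length ≤ n → w.edges.Nodup → ¬ w.Nil →
      ∃ (v : α) (c : H.Walk v v), c.IsCycle ∧ c.length ≤ w.length := by
  intro n
  induction n with
  | zero =>
    intro u w hlen hnd hnil
    exact absurd (Walk.nil_iff_length_eq.mpr (by omega)) hnil
  | succ n ih =>
    intro u w hlen hnd hnil
    by_cases hsd : w.support.tail.Nodup
    · exact ⟨u, w, ⟨⟨⟨hnd⟩, fun h => hnil (by rw [h]; exact Walk.nil_nil)⟩, hsd⟩, le_rfl⟩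
    · obtain ⟨x, hx⟩ := List.exists_duplicate_iff_not_nodup.mpr hsd
      classical
      have hxs : x ∈ w.support := List.mem_of_mem_tail hx.mem
      have hre : (w.rotate x hxs).edges.Nodup :=
        ((w.rotate_edges x hxs).perm.nodup_iff).mpr hnd
      have hrl : (w.rotate x hxs).length = w.length := by
        rw [← Walk.length_edges, ← Walk.length_edges, (w.rotate_edges x hxs).perm.length_eq]
      have hrd : List.Duplicate x (w.rotate x hxs).support.tail := by
        rw [List.duplicate_iff_two_le_count] at hx ⊢
        rwa [(w.support_rotate x hxs).perm.count_eq]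
      obtain ⟨w₁, h1, h2, h3⟩ := shrink_step' (w.rotate x hxs) hre hrd
      obtain ⟨v, c, hc, hcl⟩ := ih w₁ (by omega) h1 h2
      exact ⟨v, c, hc, by omega⟩

variable {V₀ : Type*} {r : ℕ} {G : SimpleGraph (V₀ × Fin r)} {G₀ : SimpleGraph V₀}

private def liftFiber' (v : V₀) :
    ∀ {x y : V₀ × Fin r} (w : G.Walk x y), (∀ z ∈ w.support, z.1 = v) →
      (G.comap fun a : Fin r => (v, a)).Walk x.2 y.2
  | _, _, Walk.nil, _ => Walk.nil
  | x, y, @Walk.cons _ _ _ c _ h p, hs =>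
    Walk.cons (u := x.2) (v := c.2)
      (show G.Adj (v, x.2) (v, c.2) by
        have hx : ((v, x.2) : V₀ × Fin r) = x := Prod.ext (hs x (by simp)).symm rfl
        have hc : ((v, c.2) : V₀ × Fin r) = c := Prod.ext (hs c (by simp)).symm rfl
        rwa [hx, hc])
      (liftFiber' v p fun z hz => hs z (by simp [hz]))

private lemma liftFiber'_support (v : V₀) {x y : V₀ × Fin r} (w : G.Walk x y) :
    ∀ hs, (liftFiber' v w hs).support.map (fun a : Fin r => ((v, a) : V₀ × Fin r))
      = w.support := by
  induction w with
  | nil =>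
    rename_i u
    intro hs
    simp only [liftFiber', Walk.support_nil, List.map_cons, List.map_nil]
    rw [(Prod.ext (hs u (by simp)).symm rfl : ((v, u.2) : V₀ × Fin r) = u)]
  | @cons x c y h p ih =>
    intro hs
    simp only [liftFiber', Walk.support_cons, List.map_cons]
    erw [Walk.support_cons, List.map_cons, ih, (Prod.ext (hs x (by simp)).symm rfl : ((v, x.2) : V₀ × Fin r) = x)]

private lemma liftFiber'_edges (v : V₀) {x y : V₀ × Fin r} (w : G.Walk x y) :
    ∀ hs, (liftFiber' v w hs).edges.map (Sym2.map (fun a : Fin r => ((v, a) : V₀ × Fin r)))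
      = w.edges := by
  induction w with
  | nil => intro hs; simp [liftFiber']
  | @cons x c y h p ih =>
    intro hs
    simp only [liftFiber', Walk.edges_cons, List.map_cons, Sym2.map_pair_eq]
    erw [Walk.edges_cons, List.map_cons, Sym2.map_pair_eq, ih, (Prod.ext (hs x (by simp)).symm rfl : ((v, x.2) : V₀ × Fin r) = x),
        (Prod.ext (hs c (by simp)).symm rfl : ((v, c.2) : V₀ × Fin r) = c)]

private lemma liftFiber'_length (v : V₀) {x y : V₀ × Fin r} (w : G.Walk x y) :
    ∀ hs, (liftFiber' v w hs).length = w.length := by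
  induction w with
  | nil => intro hs; simp [liftFiber']
  | @cons x c y h p ih =>
    intro hs
    simp only [liftFiber', Walk.length_cons]
    erw [Walk.length_cons, ih]

private lemma key_inj'
    (hcross : ∀ u v : V₀, u ≠ v → ∀ a b : Fin r, G.Adj (u, a) (v, b) → G₀.Adj u v)
    (hone : ∀ u v : V₀, G₀.Adj u v → ∃! p : Fin r × Fin r, G.Adj (u, p.1) (v, p.2)) :
    ∀ {d₁ d₂ : Sym2 (V₀ × Fin r)}, d₁ ∈ G.edgeSet → d₂ ∈ G.edgeSet →
      Sym2.map Prod.fst d₁ = Sym2.map Prod.fst d₂ → ¬ (Sym2.map Prod.fst d₁).IsDiag →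
      d₁ = d₂ := by
  intro d₁ d₂
  refine Sym2.inductionOn₂ d₁ d₂ ?_
  intro p q p' q' h1 h2 heq hdiag
  rw [Sym2.map_pair_eq, Sym2.map_pair_eq] at heq
  rw [Sym2.map_pair_eq, Sym2.mk_isDiag_iff] at hdiag
  rw [SimpleGraph.mem_edgeSet] at h1 h2
  have hadj : G₀.Adj p.1 q.1 := hcross _ _ hdiag _ _ h1
  obtain ⟨pr, hpr, huniq⟩ := hone p.1 q.1 hadj
  have e1 : (p.2, q.2) = pr := huniq (p.2, q.2) h1
  rcases Sym2.eq_iff.mp heq with ⟨ha, hb⟩ | ⟨ha, hb⟩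
  · have e2 : (p'.2, q'.2) = pr := by
      apply huniq
      show G.Adj (p.1, p'.2) (q.1, q'.2)
      rw [ha, hb]
      exact h2
    have h12 : (p.2, q.2) = (p'.2, q'.2) := e1.trans e2.symm
    rw [Prod.ext_iff] at h12
    rw [show p = p' from Prod.ext ha h12.1, show q = q' from Prod.ext hb h12.2]
  · -- ha : p.1 = q'.1, hb : q.1 = p'.1
    have e2 : (q'.2, p'.2) = pr := by
      apply huniq
      show G.Adj (p.1, q'.2) (q.1, p'.2)
      rw [ha, hb]
      exact h2.symm
    have h12 : (p.2, q.2) = (q'.2, p'.2) := e1.trans e2.symm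
    rw [Prod.ext_iff] at h12
    rw [show p = q' from Prod.ext ha h12.1, show q = p' from Prod.ext hb h12.2,
      Sym2.eq_swap]

private def projWalk' (G₀ : SimpleGraph V₀) [DecidableEq V₀]
    (hcross : ∀ u v : V₀, u ≠ v → ∀ a b : Fin r, G.Adj (u, a) (v, b) → G₀.Adj u v) :
    ∀ {x y : V₀ × Fin r}, G.Walk x y → G₀.Walk x.1 y.1
  | _, _, Walk.nil => Walk.nil
  | x, _, @Walk.cons _ _ _ c _ h p =>
    if hc : x.1 = c.1 then (projWalk' G₀ hcross p).copy hc.symm rfl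
    else Walk.cons (hcross x.1 c.1 hc x.2 c.2 h) (projWalk' G₀ hcross p)

section
variable [DecidableEq V₀]
  (hcross : ∀ u v : V₀, u ≠ v → ∀ a b : Fin r, G.Adj (u, a) (v, b) → G₀.Adj u v)

private lemma projWalk'_length {x y : V₀ × Fin r} (w : G.Walk x y) :
    (projWalk' G₀ hcross w).length ≤ w.length := by
  induction w with
  | nil => simp [projWalk']
  | @cons x c y h p ih =>
    rw [projWalk']
    split
    · rw [Walk.length_copy, Walk.length_cons]; omega
    · rw [Walk.length_cons, Walk.length_cons]; omega

private lemma projWalk'_mem_edges {x y : V₀ × Fin r} (w : G.Walk x y) :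
    ∀ e ∈ (projWalk' G₀ hcross w).edges, ∃ d ∈ w.edges, Sym2.map Prod.fst d = e := by
  induction w with
  | nil => simp [projWalk']
  | @cons x c y h p ih =>
    intro e he
    rw [projWalk'] at he
    split at he
    · rw [Walk.edges_copy] at he
      obtain ⟨d, hd, hde⟩ := ih e he
      exact ⟨d, by simp [hd], hde⟩
    · rw [Walk.edges_cons] at he
      rcases List.mem_cons.mp he with he | he
      · exact ⟨s(x, c), by simp, by rw [Sym2.map_pair_eq, he]⟩
      · obtain ⟨d, hd, hde⟩ := ih e he
        exact ⟨d, by simp [hd], hde⟩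

private lemma projWalk'_support_eq {x y : V₀ × Fin r} (w : G.Walk x y)
    (hlen : (projWalk' G₀ hcross w).length = 0) : ∀ z ∈ w.support, z.1 = x.1 := by
  induction w with
  | nil => simp
  | @cons x c y h p ih =>
    rw [projWalk'] at hlen
    split at hlen
    · rename_i hc
      rw [Walk.length_copy] at hlen
      intro z hz
      rcases List.mem_cons.mp (by simpa using hz) with hz | hz
      · rw [hz]
      · rw [ih hlen z hz, ← hc]
    · simp at hlen

private lemma projWalk'_edges_nodup
    (hone : ∀ u v : V₀, G₀.Adj u v → ∃! p : Fin r × Fin r, G.Adj (u, p.1) (v, p.2))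
    {x y : V₀ × Fin r} (w : G.Walk x y) (hnd : w.edges.Nodup) :
    (projWalk' G₀ hcross w).edges.Nodup := by
  induction w with
  | nil => simp [projWalk']
  | @cons x c y h p ih =>
    rw [Walk.edges_cons, List.nodup_cons] at hnd
    rw [projWalk']
    split
    · rw [Walk.edges_copy]; exact ih hnd.2
    · rename_i hc
      rw [Walk.edges_cons, List.nodup_cons]
      refine ⟨?_, ih hnd.2⟩
      intro hmem
      obtain ⟨d, hd, hde⟩ := projWalk'_mem_edges hcross p _ hmem
      have hd1 : d ∈ G.edgeSet := p.edges_subset_edgeSet hd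
      have hd2 : s(x, c) ∈ G.edgeSet := (SimpleGraph.mem_edgeSet G).mpr h
      have : d = s(x, c) := by
        apply key_inj' hcross hone hd1 hd2
        · rw [hde, Sym2.map_pair_eq]
        · rw [hde, Sym2.mk_isDiag_iff]; exact hc
      exact hnd.1 (this ▸ hd)

end

end GirthSplitAux

private lemma le_length_of_cycle' {α : Type*} {H : SimpleGraph α} {g : ℕ}
    (hg : (g : ℕ∞) ≤ H.girth) {v : α} {c : H.Walk v v} (hc : c.IsCycle) : g ≤ c.length := by
  have hle : H.egirth ≤ c.length := SimpleGraph.le_egirth.mp le_rfl _ c hc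
  have hne : H.egirth ≠ ⊤ := ne_top_of_le_ne_top (WithTop.coe_ne_top) hle
  rw [SimpleGraph.girth, ENat.coe_toNat hne] at hg
  exact_mod_cast hg.trans hle

/-- Let `G₀` be a graph of girth at least `g` on vertex set `V₀`, and let `G` be a graph on
`V₀ × Fin r` obtained by replacing each vertex `v` of `G₀` by the set `S_v = {v} × Fin r`
inducing a graph of girth at least `g`, replacing each edge `uv` of `G₀` by a single edge
between `S_u` and `S_v`, with no other edges. Then `G` has girth at least `g`. -/
theorem girth_of_split {V₀ : Type*} (G₀ : SimpleGraph V₀) (g r : ℕ)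
    (G : SimpleGraph (V₀ × Fin r))
    (hgirth₀ : (g : ℕ∞) ≤ G₀.girth)
    (hfiber : ∀ v : V₀, (g : ℕ∞) ≤ (G.comap fun a : Fin r => (v, a)).girth)
    (hcross : ∀ u v : V₀, u ≠ v → ∀ a b : Fin r, G.Adj (u, a) (v, b) → G₀.Adj u v)
    (hone : ∀ u v : V₀, G₀.Adj u v → ∃! p : Fin r × Fin r, G.Adj (u, p.1) (v, p.2)) :
    (g : ℕ∞) ≤ G.girth := by
  classical
  by_cases hg0 : g = 0
  · subst hg0; simp
  -- main bound: every cycle of G has length at least g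
  have main : ∀ (x : V₀ × Fin r) (w : G.Walk x x), w.IsCycle → g ≤ w.length := by
    intro x w hw
    by_cases hall : ∀ z ∈ w.support, z.1 = x.1
    · -- contained in a fiber
      set c := liftFiber' x.1 w hall with hcdef
      have hlen : c.length = w.length := liftFiber'_length x.1 w hall
      have hcyc : c.IsCycle := by
        refine ⟨⟨⟨?_⟩, ?_⟩, ?_⟩
        · refine List.Nodup.of_map (Sym2.map (fun a : Fin r => ((x.1, a) : V₀ × Fin r))) ?_
          rw [liftFiber'_edges x.1 w hall]
          exact hw.isCircuit.isTrail.edges_nodup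
        · intro hnil
          have h3 := hw.three_le_length
          have : c.length = 0 := by rw [hnil]; rfl
          omega
        · have hns := hw.support_nodup
          rw [← liftFiber'_support x.1 w hall, ← List.map_tail] at hns
          exact hns.of_map _
      calc g ≤ c.length := le_length_of_cycle' (hfiber x.1) hcyc
        _ = w.length := hlen
    · -- uses a cross edge
      set pw := projWalk' G₀ hcross w with hpwdef
      have hnd : pw.edges.Nodup :=
        projWalk'_edges_nodup hcross hone w hw.isCircuit.isTrail.edges_nodup
      have hnnil : ¬ pw.Nil := by
        intro hnil
        exact hall (projWalk'_support_eq hcross w (Walk.nil_iff_length_eq.mp hnil))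
      obtain ⟨v, c, hc, hcl⟩ :=
        exists_cycle_of_closed_trail' pw.length pw le_rfl hnd hnnil
      have h1 : g ≤ c.length := le_length_of_cycle' hgirth₀ hc
      have h2 : pw.length ≤ w.length := projWalk'_length hcross w
      omega
  -- G is not acyclic
  have hV : ¬ G₀.IsAcyclic := by
    intro hac
    rw [hac.girth_eq_zero] at hgirth₀
    exact hg0 (by exact_mod_cast le_antisymm hgirth₀ (by simp))
  simp only [SimpleGraph.IsAcyclic, not_forall, not_not] at hV
  obtain ⟨v₀, c₀, hc₀⟩ := hV
  have hVf : ¬ (G.comap fun a : Fin r => ((v₀ : V₀), a)).IsAcyclic := by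
    intro hac
    have := hfiber v₀
    rw [hac.girth_eq_zero] at this
    exact hg0 (by exact_mod_cast le_antisymm this (by simp))
  simp only [SimpleGraph.IsAcyclic, not_forall, not_not] at hVf
  obtain ⟨a, cf, hcf⟩ := hVf
  let homf : (G.comap fun a : Fin r => ((v₀ : V₀), a)) →g G :=
    ⟨fun a => (v₀, a), fun h => h⟩
  have hinj : Function.Injective homf := by
    intro a b hab
    have : ((v₀, a) : V₀ × Fin r) = (v₀, b) := hab
    exact (Prod.ext_iff.mp this).2
  have hGcyc : ¬ G.IsAcyclic := fun hac => hac _ (hcf.map hinj)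
  have hne : G.egirth ≠ ⊤ := fun h => hGcyc (SimpleGraph.egirth_eq_top.mp h)
  rw [SimpleGraph.girth, ENat.coe_toNat hne]
  exact SimpleGraph.le_egirth.mpr fun a w hw => by exact_mod_cast main a w hw
end
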